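/- arXiv:1801.06818 — 7 statements merged into one kernel-verified Lean document; each statement's English description precedes it below -/
import Mathlib

section
/- Let y be a positive integer and ϑ, ε > 0. The total variation distance between (negbinom(y, (1+ε)^{-ϑ}) shifted down by y) and Ber(ϑyε) is at most (ε²/2)(ϑy + ϑ²(2y+1)y). -/
open Real

/-- The negative binomial distribution `negbinom(y, p)` shifted down by `y`:
mass at `k` is `C(y+k-1, y-1) p^y (1-p)^k`. -/
noncomputable def negbinomShift (y : ℕ) (p : ℝ) (k : ℕ) : ℝ :=
  (Nat.choose (y + k - 1) (y - 1) : ℝ) * p ^ y * (1 - p) ^ k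

/-- The Bernoulli distribution with parameter `q` on `ℕ`. -/
noncomputable def bern (q : ℝ) (k : ℕ) : ℝ :=
  if k = 0 then 1 - q else if k = 1 then q else 0

lemma aux_log_lb {x : ℝ} (hx : 0 ≤ x) : x - x ^ 2 / 2 ≤ Real.log (1 + x) := by
  have key : MonotoneOn (fun t : ℝ => Real.log (1 + t) - (t - t ^ 2 / 2)) (Set.Ici 0) := by
    apply monotoneOn_of_hasDerivWithinAt_nonneg (convex_Ici 0)
      (f' := fun t => 1 / (1 + t) - (1 - t))
    · apply ContinuousOn.sub
      · apply ContinuousOn.log (by fun_prop)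
        intro t ht
        have h0 : (0:ℝ) ≤ t := ht
        exact ne_of_gt (by linarith)
      · fun_prop
    · intro t ht
      rw [interior_Ici] at ht
      have h0 : (0:ℝ) < t := ht
      have h1 : (0:ℝ) < 1 + t := by linarith
      have d1 : HasDerivAt (fun t : ℝ => 1 + t) 1 t := by
        simpa using (hasDerivAt_id t).const_add (1:ℝ)
      have d2 : HasDerivAt (fun t : ℝ => Real.log (1 + t)) (1 / (1 + t)) t := d1.log (ne_of_gt h1)
      have d3 : HasDerivAt (fun t : ℝ => t - t ^ 2 / 2) (1 - t) t := by
        have h4 := (hasDerivAt_id' t).sub ((hasDerivAt_pow 2 t).div_const 2)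
        exact h4.congr_deriv (by norm_num)
      exact (d2.sub d3).hasDerivWithinAt
    · intro t ht
      rw [interior_Ici] at ht
      have h0 : (0:ℝ) < t := ht
      have h1 : (0:ℝ) < 1 + t := by linarith
      have h2 : 1 / (1 + t) - (1 - t) = t ^ 2 / (1 + t) := by field_simp; ring
      rw [h2]; positivity
  have h2 := key Set.self_mem_Ici (Set.mem_Ici.mpr hx) hx
  norm_num at h2
  linarith

lemma aux_exp_ub {x : ℝ} (hx : 0 ≤ x) : Real.exp (-x) ≤ 1 - x + x ^ 2 / 2 := by
  have h1 := Real.quadratic_le_exp_of_nonneg hx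
  have h2 : Real.exp (-x) * Real.exp x = 1 := by rw [← Real.exp_add]; simp
  have h3 := Real.exp_pos x
  have hc : (0:ℝ) < 1 - x + x ^ 2 / 2 := by nlinarith
  have h4 : (1 - x + x ^ 2 / 2) * (1 + x + x ^ 2 / 2) ≤ (1 - x + x ^ 2 / 2) * Real.exp x :=
    mul_le_mul_of_nonneg_left h1 hc.le
  have h5 : (1:ℝ) ≤ (1 - x + x ^ 2 / 2) * (1 + x + x ^ 2 / 2) := by nlinarith [sq_nonneg (x^2)]
  nlinarith

/-- For a positive integer `y` and `ϑ, ε > 0`, the total variation distance between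
`negbinom(y, (1+ε)^{-ϑ}) - y` and `Ber(ϑ y ε)` is at most `(ε²/2)(ϑ y + ϑ²(2y+1)y)`. -/
theorem stmt_3 (y : ℕ) (hy : 0 < y) (ϑ ε : ℝ) (hϑ : 0 < ϑ) (hε : 0 < ε)
    (hq : ϑ * (y : ℝ) * ε ≤ 1) :
    (1 / 2) * ∑' k : ℕ, |negbinomShift y ((1 + ε) ^ (-ϑ)) k - bern (ϑ * (y : ℝ) * ε) k|
      ≤ (ε ^ 2 / 2) * (ϑ * (y : ℝ) + ϑ ^ 2 * (2 * (y : ℝ) + 1) * (y : ℝ)) := by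
  set p : ℝ := (1 + ε) ^ (-ϑ) with hp_def
  have h1ε : (1:ℝ) < 1 + ε := by linarith
  set L : ℝ := Real.log (1 + ε) with hL_def
  have hL0 : 0 < L := Real.log_pos h1ε
  have hLε : L ≤ ε := by
    have := Real.log_le_sub_one_of_pos (by linarith : (0:ℝ) < 1 + ε)
    rw [hL_def]; linarith
  have hLlb : ε - ε ^ 2 / 2 ≤ L := aux_log_lb hε.le
  have hyR : (0:ℝ) < (y:ℝ) := Nat.cast_pos.mpr hy
  have hp_exp : p = Real.exp (-(ϑ * L)) := by
    rw [hp_def, Real.rpow_def_of_pos (by linarith)]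
    congr 1; rw [hL_def]; ring
  have hp0 : 0 < p := Real.rpow_pos_of_pos (by linarith) _
  have hp1 : p < 1 := Real.rpow_lt_one_of_one_lt_of_neg h1ε (neg_lt_zero.mpr hϑ)
  have hpy : p ^ y = Real.exp (-(ϑ * (y:ℝ) * L)) := by
    rw [hp_exp, ← Real.exp_nat_mul]
    congr 1; ring
  have hA : ∀ a : ℝ, 0 ≤ a → 1 - a * ε ≤ Real.exp (-(a * L)) := by
    intro a ha
    have h1 := Real.add_one_le_exp (-(a * L))
    have h2 : a * L ≤ a * ε := mul_le_mul_of_nonneg_left hLε ha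
    linarith
  have hB : ∀ a : ℝ, 0 ≤ a → Real.exp (-(a * L)) ≤ 1 - a * ε + a * (a + 1) * ε ^ 2 / 2 := by
    intro a ha
    have h1 : Real.exp (-(a * L)) ≤ 1 - a * L + (a * L) ^ 2 / 2 := aux_exp_ub (by positivity)
    have h2 : a * (ε - ε ^ 2 / 2) ≤ a * L := mul_le_mul_of_nonneg_left hLlb ha
    have h3 : (a * L) ^ 2 ≤ (a * ε) ^ 2 := by
      apply pow_le_pow_left₀ (by positivity) (mul_le_mul_of_nonneg_left hLε ha)
    nlinarith
  -- numeric facts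
  have hP0low : 1 - ϑ * (y:ℝ) * ε ≤ p ^ y := by
    rw [hpy]
    have := hA (ϑ * y) (by positivity)
    calc 1 - ϑ * (y:ℝ) * ε = 1 - (ϑ * y) * ε := by ring
    _ ≤ Real.exp (-(ϑ * y * L)) := this
  have hpyle1 : p ^ y ≤ 1 := pow_le_one₀ hp0.le hp1.le
  have h1p_ub : 1 - p ≤ ϑ * ε := by
    have := hA ϑ hϑ.le; rw [hp_exp]; linarith
  have h1p_lb : ϑ * ε - ϑ * (ϑ + 1) * ε ^ 2 / 2 ≤ 1 - p := by
    have := hB ϑ hϑ.le; rw [hp_exp]; linarith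
  have h1p_pos : 0 < 1 - p := by linarith
  have hP1_ub : (y:ℝ) * p ^ y * (1 - p) ≤ ϑ * (y:ℝ) * ε := by
    have h6 : p ^ y * (1 - p) ≤ 1 * (ϑ * ε) :=
      mul_le_mul hpyle1 h1p_ub h1p_pos.le (by norm_num)
    nlinarith [mul_le_mul_of_nonneg_left h6 hyR.le]
  have hkey : ϑ * (y:ℝ) * ε - (ε ^ 2 / 2) * (ϑ * (y:ℝ) + ϑ ^ 2 * (2 * (y:ℝ) + 1) * (y:ℝ))
      ≤ (y:ℝ) * p ^ y * (1 - p) := by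
    have ha'0 : (0:ℝ) ≤ 1 - ϑ * (y:ℝ) * ε := by linarith
    have hApos : 0 ≤ p ^ y := by positivity
    have hprod : (1 - ϑ * (y:ℝ) * ε) * (ϑ * ε - ϑ * (ϑ + 1) * ε ^ 2 / 2) ≤ p ^ y * (1 - p) := by
      rcases le_or_gt 0 (ϑ * ε - ϑ * (ϑ + 1) * ε ^ 2 / 2) with h | h
      · exact mul_le_mul hP0low h1p_lb h (by linarith)
      · have h7 : (1 - ϑ * (y:ℝ) * ε) * (ϑ * ε - ϑ * (ϑ + 1) * ε ^ 2 / 2) ≤ 0 :=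
          mul_nonpos_of_nonneg_of_nonpos ha'0 h.le
        have h8 : 0 ≤ p ^ y * (1 - p) := mul_nonneg hApos h1p_pos.le
        linarith
    have hpos : 0 ≤ ϑ ^ 2 * (y:ℝ) ^ 2 * ε ^ 3 * (ϑ + 1) := by positivity
    nlinarith [mul_le_mul_of_nonneg_left hprod hyR.le, hpos]
  -- the series
  have hchoose : ∀ k : ℕ, (y + k - 1).choose (y - 1) = (k + (y - 1)).choose (y - 1) := by
    intro k; congr 1; omega
  have hhs : HasSum (fun k => negbinomShift y p k) 1 := by
    have hr : ‖1 - p‖ < 1 := by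
      rw [Real.norm_eq_abs, abs_of_nonneg h1p_pos.le]; linarith
    have h := (hasSum_choose_mul_geometric_of_norm_lt_one (y - 1) hr).mul_left (p ^ y)
    have e1 : p ^ y * (1 / (1 - (1 - p)) ^ (y - 1 + 1)) = 1 := by
      rw [show (1 : ℝ) - (1 - p) = p by ring, show y - 1 + 1 = y from by omega]
      field_simp
    have e2 : (fun k => negbinomShift y p k)
        = fun n : ℕ => p ^ y * (((n + (y - 1)).choose (y - 1) : ℝ) * (1 - p) ^ n) := by
      funext k; rw [negbinomShift, hchoose k]; ring
    rw [e2]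
    rw [e1] at h
    exact h
  have hPnonneg : ∀ k, 0 ≤ negbinomShift y p k := by
    intro k
    exact mul_nonneg (mul_nonneg (by positivity) (by positivity)) (pow_nonneg h1p_pos.le k)
  have hBsumm : Summable (bern (ϑ * (y:ℝ) * ε)) := by
    apply summable_of_ne_finset_zero (s := {0, 1})
    intro k hk
    simp only [Finset.mem_insert, Finset.mem_singleton, not_or] at hk
    simp [bern, hk.1, hk.2]
  set f : ℕ → ℝ := fun k => |negbinomShift y p k - bern (ϑ * (y:ℝ) * ε) k| with hf_def
  have hfsumm : Summable f := (hhs.summable.sub hBsumm).abs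
  have hsplit := Summable.sum_add_tsum_nat_add 2 hfsumm
  have hsplitP := Summable.sum_add_tsum_nat_add 2 hhs.summable
  rw [hhs.tsum_eq] at hsplitP
  have htail : ∑' i : ℕ, f (i + 2) = ∑' i : ℕ, negbinomShift y p (i + 2) := by
    apply tsum_congr; intro i
    have hb : bern (ϑ * (y:ℝ) * ε) (i + 2) = 0 := by simp [bern]
    rw [hf_def]; simp only [hb, sub_zero]
    exact abs_of_nonneg (hPnonneg _)
  have hP0 : negbinomShift y p 0 = p ^ y := by
    rw [negbinomShift, show y + 0 - 1 = y - 1 from by omega, Nat.choose_self]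
    simp
  have hP1v : negbinomShift y p 1 = (y:ℝ) * p ^ y * (1 - p) := by
    rw [negbinomShift, show y + 1 - 1 = y from by omega]
    rw [show y.choose (y - 1) = y from by
      rw [Nat.choose_symm (by omega : 1 ≤ y), Nat.choose_one_right]]
    ring
  have hb0 : bern (ϑ * (y:ℝ) * ε) 0 = 1 - ϑ * (y:ℝ) * ε := by simp [bern]
  have hb1 : bern (ϑ * (y:ℝ) * ε) 1 = ϑ * (y:ℝ) * ε := by simp [bern]
  have hf0 : f 0 = p ^ y - (1 - ϑ * (y:ℝ) * ε) := by
    rw [hf_def]; simp only [hP0, hb0]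
    exact abs_of_nonneg (by linarith)
  have hf1 : f 1 = ϑ * (y:ℝ) * ε - (y:ℝ) * p ^ y * (1 - p) := by
    rw [hf_def]; simp only [hP1v, hb1]
    rw [abs_of_nonpos (by linarith)]; ring
  have hsum2f : ∑ i ∈ Finset.range 2, f i = f 0 + f 1 := by
    simp [Finset.sum_range_succ]
  have hsum2P : ∑ i ∈ Finset.range 2, negbinomShift y p i
      = p ^ y + (y:ℝ) * p ^ y * (1 - p) := by
    simp [Finset.sum_range_succ, hP0, hP1v]
  have htsumf : ∑' k : ℕ, f k
      = (f 0 + f 1) + (1 - (p ^ y + (y:ℝ) * p ^ y * (1 - p))) := by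
    rw [← hsplit, hsum2f, htail]
    have : ∑' i : ℕ, negbinomShift y p (i + 2)
        = 1 - (p ^ y + (y:ℝ) * p ^ y * (1 - p)) := by
      rw [← hsum2P]; linarith [hsplitP]
    rw [this]
  calc (1/2 : ℝ) * ∑' k : ℕ, f k
      = (1/2) * ((f 0 + f 1) + (1 - (p ^ y + (y:ℝ) * p ^ y * (1 - p)))) := by rw [htsumf]
    _ = ϑ * (y:ℝ) * ε - (y:ℝ) * p ^ y * (1 - p) := by rw [hf0, hf1]; ring
    _ ≤ (ε ^ 2 / 2) * (ϑ * (y:ℝ) + ϑ ^ 2 * (2 * (y:ℝ) + 1) * (y:ℝ)) := by linarith [hkey]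
end

section
/- For integers n ≥ m ≥ 1 and θ > 0, the integral (1/T)∫₀^T π_n(ln(T/t), θ, m) dt equals Γ(1/θ + m)Γ(n) / (θ Γ(m) Γ(n + 1/θ + 1)), where π_n(s, θ, m) = binom(n-1, m-1) e^{-mθs}(1-e^{-θs})^{n-m}. -/
open Real MeasureTheory

lemma real_beta_aux {s t : ℝ} (hs : 0 < s) (ht : 0 < t) :
    ∫ x in (0:ℝ)..1, x ^ (s - 1) * (1 - x) ^ (t - 1)
      = Real.Gamma s * Real.Gamma t / Real.Gamma (s + t) := by
  have h := Complex.Gamma_mul_Gamma_eq_betaIntegral (s := (s:ℂ)) (t := (t:ℂ))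
    (by simpa using hs) (by simpa using ht)
  have hbeta : Complex.betaIntegral (s:ℂ) (t:ℂ)
      = ((∫ x in (0:ℝ)..1, x ^ (s - 1) * (1 - x) ^ (t - 1) : ℝ) : ℂ) := by
    rw [Complex.betaIntegral, ← intervalIntegral.integral_ofReal]
    apply intervalIntegral.integral_congr
    intro x hx
    rw [Set.uIcc_of_le zero_le_one] at hx
    show (x:ℂ) ^ ((s:ℂ) - 1) * (1 - (x:ℂ)) ^ ((t:ℂ) - 1)
        = ((x ^ (s - 1) * (1 - x) ^ (t - 1) : ℝ) : ℂ)
    rw [Complex.ofReal_mul, Complex.ofReal_cpow hx.1 (s - 1),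
      Complex.ofReal_cpow (by linarith [hx.2]) (t - 1)]
    push_cast
    ring
  have hG : (0:ℝ) < Real.Gamma (s + t) := Real.Gamma_pos_of_pos (by linarith)
  rw [hbeta, Complex.Gamma_ofReal, Complex.Gamma_ofReal, ← Complex.ofReal_add,
    Complex.Gamma_ofReal, ← Complex.ofReal_mul, ← Complex.ofReal_mul] at h
  have h' : Real.Gamma s * Real.Gamma t
      = Real.Gamma (s + t) * ∫ x in (0:ℝ)..1, x ^ (s - 1) * (1 - x) ^ (t - 1) := by
    exact_mod_cast h
  rw [eq_div_iff hG.ne', h']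
  ring

/-- For integers `n ≥ m ≥ 1`, `θ > 0` and `T > 0`,
`(1/T) ∫₀^T C(n-1,m-1) e^{-mθ ln(T/t)} (1 - e^{-θ ln(T/t)})^{n-m} dt
  = Γ(1/θ + m) Γ(n) / (θ Γ(m) Γ(n + 1/θ + 1))`. -/
theorem stmt_6 (m n : ℕ) (hm : 1 ≤ m) (hmn : m ≤ n) (θ : ℝ) (hθ : 0 < θ)
    (T : ℝ) (hT : 0 < T) :
    (1 / T) * ∫ t in (0:ℝ)..T,
        (Nat.choose (n - 1) (m - 1) : ℝ) * Real.exp (-((m : ℝ) * θ * Real.log (T / t)))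
          * (1 - Real.exp (-(θ * Real.log (T / t)))) ^ (n - m)
      = Real.Gamma (1 / θ + m) * Real.Gamma n
          / (θ * Real.Gamma m * Real.Gamma ((n : ℝ) + 1 / θ + 1)) := by
  have hm1 : (1:ℝ) ≤ (m:ℝ) := by exact_mod_cast hm
  set C : ℝ := (Nat.choose (n - 1) (m - 1) : ℝ) with hCdef
  set p : ℝ := (m:ℝ) - 1 + 1/θ with hpdef
  have hθ' : (0:ℝ) < 1/θ := by positivity
  have hp0 : 0 < p := by rw [hpdef]; linarith
  set g : ℝ → ℝ := fun v => C * T / θ * (v ^ p * (1 - v) ^ (n - m)) with hgdef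
  set f : ℝ → ℝ := fun x => (x / T) ^ θ with hfdef
  set f' : ℝ → ℝ := fun x => θ * (x / T) ^ (θ - 1) * (1 / T) with hf'def
  set F : ℝ → ℝ := fun x => C * (x / T) ^ ((m:ℝ) * θ) * (1 - (x / T) ^ θ) ^ (n - m) with hFdef
  have hrpow_cont : ∀ q : ℝ, 0 < q → Continuous (fun v : ℝ => v ^ q) := fun q hq =>
    continuous_iff_continuousAt.2 fun v => Real.continuousAt_rpow_const v q (Or.inr hq.le)
  have hfc : Continuous f := (hrpow_cont θ hθ).comp (continuous_id.div_const T)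
  have hgc : Continuous g := by
    apply Continuous.mul continuous_const
    exact (hrpow_cont p hp0).mul ((continuous_const.sub continuous_id).pow _)
  have hFc : Continuous F := by
    apply Continuous.mul
    · exact continuous_const.mul
        ((hrpow_cont _ (by positivity)).comp (continuous_id.div_const T))
    · exact (continuous_const.sub hfc).pow _
  -- pointwise identities
  have hFpt : ∀ x ∈ Set.Ioc (0:ℝ) T, f' x • (g ∘ f) x = F x := by
    intro x hx
    have hu : 0 < x / T := div_pos hx.1 hT
    show θ * (x / T) ^ (θ - 1) * (1 / T)
        * (C * T / θ * (((x / T) ^ θ) ^ p * (1 - (x / T) ^ θ) ^ (n - m)))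
      = C * (x / T) ^ ((m:ℝ) * θ) * (1 - (x / T) ^ θ) ^ (n - m)
    rw [← Real.rpow_mul hu.le θ p]
    have hmul : (x / T) ^ (θ - 1) * (x / T) ^ (θ * p) = (x / T) ^ ((m:ℝ) * θ) := by
      rw [← Real.rpow_add hu]
      congr 1
      rw [hpdef]
      field_simp
      ring
    rw [← hmul]
    field_simp
  have hEpt : ∀ x ∈ Set.Ioc (0:ℝ) T,
      C * Real.exp (-((m : ℝ) * θ * Real.log (T / x)))
          * (1 - Real.exp (-(θ * Real.log (T / x)))) ^ (n - m) = F x := by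
    intro x hx
    have hx0 : 0 < x := hx.1
    have hu : 0 < x / T := div_pos hx0 hT
    have hlog : Real.log (T / x) = -Real.log (x / T) := by
      rw [← Real.log_inv]; congr 1; field_simp
    have hexp : ∀ a : ℝ, Real.exp (-(a * Real.log (T / x))) = (x / T) ^ a := by
      intro a
      rw [Real.rpow_def_of_pos hu, hlog]
      ring_nf
    rw [hexp ((m:ℝ) * θ), hexp θ]
  have hI : (∫ t in (0:ℝ)..T,
        C * Real.exp (-((m : ℝ) * θ * Real.log (T / t)))
          * (1 - Real.exp (-(θ * Real.log (T / t)))) ^ (n - m))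
      = ∫ x in (0:ℝ)..T, f' x • (g ∘ f) x := by
    apply intervalIntegral.integral_congr_ae
    filter_upwards with x hx
    rw [Set.uIoc_of_le hT.le] at hx
    rw [hEpt x hx, hFpt x hx]
  -- substitution
  have hf0 : f 0 = 0 := by simp [hfdef, Real.zero_rpow hθ.ne']
  have hfT : f T = 1 := by simp [hfdef, div_self hT.ne', Real.one_rpow]
  have hmin : min (0:ℝ) T = 0 := min_eq_left hT.le
  have hmax : max (0:ℝ) T = T := max_eq_right hT.le
  have hsub : (∫ x in (0:ℝ)..T, f' x • (g ∘ f) x) = ∫ v in (f 0)..(f T), g v := by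
    apply intervalIntegral.integral_comp_smul_deriv''' hfc.continuousOn
    · intro x hx
      rw [hmin, hmax] at hx
      have hx0 : 0 < x := hx.1
      have h1 : HasDerivAt (fun y : ℝ => y / T) (1 / T) x := by
        simpa using (hasDerivAt_id x).div_const T
      have h2 : HasDerivAt (fun y : ℝ => y ^ θ) (θ * (x / T) ^ (θ - 1)) (x / T) :=
        Real.hasDerivAt_rpow_const (Or.inl (div_pos hx0 hT).ne')
      have hd : HasDerivAt f (f' x) x := by
        exact h2.comp x h1
      exact hd.hasDerivWithinAt
    · exact hgc.continuousOn
    · exact hgc.continuousOn.integrableOn_compact (isCompact_uIcc.image hfc)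
    · rw [Set.uIcc_of_le hT.le, integrableOn_Icc_iff_integrableOn_Ioo]
      have hFi : IntegrableOn F (Set.Ioo 0 T) :=
        (hFc.continuousOn.integrableOn_compact isCompact_Icc).mono_set Set.Ioo_subset_Icc_self
      exact hFi.congr_fun
        (fun x hx => (hFpt x ⟨hx.1, hx.2.le⟩).symm) measurableSet_Ioo
  rw [hf0, hfT] at hsub
  -- compute the beta integral
  have hbeta := real_beta_aux (s := p + 1) (t := ((n - m : ℕ) : ℝ) + 1)
    (by linarith) (by positivity)
  have hInt : (∫ v in (0:ℝ)..1, g v)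
      = C * T / θ * (Real.Gamma (p + 1) * Real.Gamma (((n - m : ℕ) : ℝ) + 1)
          / Real.Gamma (p + 1 + (((n - m : ℕ) : ℝ) + 1))) := by
    rw [hgdef]
    rw [intervalIntegral.integral_const_mul, ← hbeta]
    congr 1
    apply intervalIntegral.integral_congr
    intro v hv
    simp only [add_sub_cancel_right, Real.rpow_natCast]
  rw [hI, hsub, hInt]
  -- Gamma values
  have hps : p + 1 = 1/θ + (m:ℝ) := by rw [hpdef]; ring
  have hsum : p + 1 + (((n - m : ℕ) : ℝ) + 1) = (n:ℝ) + 1/θ + 1 := by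
    rw [hpdef, Nat.cast_sub hmn]; ring
  have hGnm : Real.Gamma (((n - m : ℕ) : ℝ) + 1) = (Nat.factorial (n - m) : ℝ) :=
    Real.Gamma_nat_eq_factorial (n - m)
  have hn' : ((n - 1 : ℕ) : ℝ) + 1 = (n : ℝ) := by
    have h := hm.trans hmn
    push_cast [Nat.cast_sub h]
    ring
  have hm' : ((m - 1 : ℕ) : ℝ) + 1 = (m : ℝ) := by
    push_cast [Nat.cast_sub hm]
    ring
  have hGn : Real.Gamma (n : ℝ) = (Nat.factorial (n - 1) : ℝ) := by
    rw [← hn']; exact Real.Gamma_nat_eq_factorial (n - 1)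
  have hGm : Real.Gamma (m : ℝ) = (Nat.factorial (m - 1) : ℝ) := by
    rw [← hm']; exact Real.Gamma_nat_eq_factorial (m - 1)
  have hchoose : C * (Nat.factorial (m - 1) : ℝ) * (Nat.factorial (n - m) : ℝ)
      = (Nat.factorial (n - 1) : ℝ) := by
    rw [hCdef]
    have h : (n - 1).choose (m - 1) * (m - 1).factorial * ((n - 1) - (m - 1)).factorial
        = (n - 1).factorial := Nat.choose_mul_factorial_mul_factorial (by omega)
    have h2 : (n - 1) - (m - 1) = n - m := by omega
    rw [h2] at h
    exact_mod_cast h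
  rw [hsum, hps, hGnm, hGn, hGm]
  have hGs : (0:ℝ) < Real.Gamma (1/θ + (m:ℝ)) := Real.Gamma_pos_of_pos (by linarith)
  have hGS : (0:ℝ) < Real.Gamma ((n:ℝ) + 1/θ + 1) := Real.Gamma_pos_of_pos (by positivity)
  have hmf : (0:ℝ) < (Nat.factorial (m - 1) : ℝ) := by positivity
  field_simp
  linear_combination hchoose
end

section
/- Let p₁,...,p_J be nonnegative reals with Σ_j p_j ≤ 1. Then the total variation distance between the product distribution ⊗_{j=1}^J Ber(p_j) on {0,1}^J and the selector distribution sel(p) is at most (Σ_j p_j)². -/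
/-- The selector distribution `sel(p)` on `ℤ₊^J`: mass `p j` on the standard basis vector
`e_j`, and mass `1 - ∑ j, p j` on the zero vector. -/
noncomputable def sel {J : ℕ} (p : Fin J → ℝ) (x : Fin J → ℕ) : ℝ :=
  (if x = 0 then 1 - ∑ j, p j else 0) + ∑ j, if x = Pi.single j 1 then p j else 0

/-- The product Bernoulli distribution `⊗_j Ber(p j)` on `ℤ₊^J`. -/
noncomputable def berProd {J : ℕ} (p : Fin J → ℝ) (x : Fin J → ℕ) : ℝ :=
  ∏ j, (if x j = 0 then 1 - p j else if x j = 1 then p j else 0)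

/-- Weierstrass product inequality. -/
theorem weier {ι : Type*} (s : Finset ι) (f : ι → ℝ) (h0 : ∀ i, 0 ≤ f i)
    (h1 : ∀ i, f i ≤ 1) :
    1 - ∑ i ∈ s, f i ≤ ∏ i ∈ s, (1 - f i) := by
  classical
  induction s using Finset.induction with
  | empty => simp
  | @insert a s' ha ih =>
    rw [Finset.sum_insert ha, Finset.prod_insert ha]
    nlinarith [Finset.prod_nonneg (fun i _ => sub_nonneg.2 (h1 i) : ∀ i ∈ s', 0 ≤ 1 - f i),
      Finset.sum_nonneg (fun i _ => h0 i : ∀ i ∈ s', 0 ≤ f i), h0 a, h1 a]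

theorem single_ne_zero_pi {J : ℕ} (j : Fin J) : (Pi.single j 1 : Fin J → ℕ) ≠ 0 := by
  intro h
  have := congrFun h j
  simp at this

theorem single_mem_piFinset {J : ℕ} (j : Fin J) :
    (Pi.single j 1 : Fin J → ℕ) ∈ Fintype.piFinset (fun _ : Fin J => ({0, 1} : Finset ℕ)) := by
  rw [Fintype.mem_piFinset]
  intro i
  by_cases h : i = j <;> simp [h, Pi.single_apply]

/-- If `p₁, …, p_J ≥ 0` with `∑ j, p j ≤ 1`, then
`d_TV(⊗_j Ber(p j), sel(p)) ≤ (∑ j, p j)²`. -/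
theorem stmt_8 {J : ℕ} (p : Fin J → ℝ) (hp : ∀ j, 0 ≤ p j) (hps : ∑ j, p j ≤ 1) :
    (1 / 2) * ∑' x : Fin J → ℕ, |berProd p x - sel p x| ≤ (∑ j, p j) ^ 2 := by
  classical
  set S := ∑ j, p j with hS
  have hp1 : ∀ j, p j ≤ 1 := fun j =>
    le_trans (Finset.single_le_sum (fun i _ => hp i) (Finset.mem_univ j)) hps
  have hS0 : 0 ≤ S := Finset.sum_nonneg fun i _ => hp i
  set s : Finset (Fin J → ℕ) := Fintype.piFinset (fun _ : Fin J => ({0, 1} : Finset ℕ)) with hsdef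
  -- off-support vanishing
  have hoff : ∀ x ∉ s, |berProd p x - sel p x| = 0 := by
    intro x hx
    rw [hsdef, Fintype.mem_piFinset] at hx
    push_neg at hx
    obtain ⟨j, hj⟩ := hx
    simp only [Finset.mem_insert, Finset.mem_singleton] at hj
    push_neg at hj
    have hb : berProd p x = 0 := by
      apply Finset.prod_eq_zero (Finset.mem_univ j)
      rw [if_neg hj.1, if_neg hj.2]
    have hx0 : x ≠ 0 := fun h => hj.1 (congrFun h j)
    have hxe : ∀ i, x ≠ Pi.single i 1 := by
      intro i h
      have hv := congrFun h j
      rw [Pi.single_apply] at hv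
      by_cases hij : j = i
      · rw [if_pos hij] at hv; exact hj.2 hv
      · rw [if_neg hij] at hv; exact hj.1 hv
    have hsel : sel p x = 0 := by
      unfold sel
      rw [if_neg hx0]
      simp only [zero_add]
      exact Finset.sum_eq_zero fun i _ => if_neg (hxe i)
    rw [hb, hsel]; simp
  -- berProd nonneg
  have hbnn : ∀ x, 0 ≤ berProd p x := by
    intro x
    apply Finset.prod_nonneg
    intro i _
    split_ifs with h1 h2
    · linarith [hp1 i]
    · exact hp i
    · exact le_refl 0
  -- sum of berProd over s is 1
  have hbsum : ∑ x ∈ s, berProd p x = 1 := by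
    rw [hsdef]
    unfold berProd
    have key := Finset.prod_univ_sum (fun _ : Fin J => ({0, 1} : Finset ℕ))
      (fun i v => if v = 0 then 1 - p i else if v = 1 then p i else 0)
    rw [← key]
    have : ∀ i : Fin J, (∑ v ∈ ({0, 1} : Finset ℕ),
        (if v = 0 then 1 - p i else if v = 1 then p i else 0)) = 1 := by
      intro i
      rw [show ({0, 1} : Finset ℕ) = insert 0 {1} from rfl,
        Finset.sum_insert (by simp), Finset.sum_singleton]
      norm_num
    rw [Finset.prod_congr rfl (fun i _ => this i), Finset.prod_const_one]
  -- sum of sel over s is 1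
  have hzmem : (0 : Fin J → ℕ) ∈ s := by
    rw [hsdef, Fintype.mem_piFinset]; intro i; simp
  have hssum : ∑ x ∈ s, sel p x = 1 := by
    unfold sel
    rw [Finset.sum_add_distrib, Finset.sum_ite_eq' s 0 (fun _ => 1 - S), if_pos hzmem,
      Finset.sum_comm]
    have : ∀ j : Fin J, (∑ x ∈ s, if x = Pi.single j 1 then p j else 0) = p j := by
      intro j
      rw [Finset.sum_ite_eq' s (Pi.single j 1) (fun _ => p j), if_pos (single_mem_piFinset j)]
    rw [Finset.sum_congr rfl (fun j _ => this j), ← hS]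
    ring
  -- pointwise bound on the negative part
  have hpt : ∀ x ∈ s, max (sel p x - berProd p x) 0 ≤
      ∑ j, if x = Pi.single j 1 then p j * S else 0 := by
    intro x hxs
    by_cases hx0 : x = 0
    · subst hx0
      have hsel : sel p 0 = 1 - S := by
        unfold sel
        rw [if_pos rfl, ← hS]
        have : ∀ j : Fin J, (if (0 : Fin J → ℕ) = Pi.single j 1 then p j else 0) = 0 :=
          fun j => if_neg (fun h => single_ne_zero_pi j h.symm)
        rw [Finset.sum_congr rfl (fun j _ => this j), Finset.sum_const_zero, add_zero]
      have hber : berProd p 0 = ∏ j, (1 - p j) := by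
        unfold berProd; simp
      have h1 : sel p 0 - berProd p 0 ≤ 0 := by
        rw [hsel, hber]
        have hw := weier Finset.univ p hp hp1
        linarith [hS]
      have h2 : ∀ j : Fin J, (if (0 : Fin J → ℕ) = Pi.single j 1 then p j * S else 0) = 0 :=
        fun j => if_neg (fun h => single_ne_zero_pi j h.symm)
      rw [Finset.sum_congr rfl (fun j _ => h2 j), Finset.sum_const_zero]
      exact max_le h1 le_rfl
    by_cases hx1 : ∃ j, x = Pi.single j 1
    · obtain ⟨j, rfl⟩ := hx1
      have huniq : ∀ i : Fin J, (Pi.single j 1 : Fin J → ℕ) = Pi.single i 1 ↔ i = j := by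
        intro i
        constructor
        · intro h
          by_contra hij
          have := congrFun h j
          simp [Pi.single_apply, fun h' : i = j => hij h'] at this
        · rintro rfl; rfl
      have hsel : sel p (Pi.single j 1) = p j := by
        unfold sel
        rw [if_neg (single_ne_zero_pi j), zero_add]
        have : ∀ i : Fin J, (if (Pi.single j 1 : Fin J → ℕ) = Pi.single i 1 then p i else 0)
            = if i = j then p i else 0 := by
          intro i; simp only [huniq i]
        rw [Finset.sum_congr rfl (fun i _ => this i), Finset.sum_ite_eq' Finset.univ j p,
          if_pos (Finset.mem_univ j)]
      have hber : berProd p (Pi.single j 1) = p j * ∏ i ∈ Finset.univ.erase j, (1 - p i) := by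
        unfold berProd
        rw [← Finset.mul_prod_erase Finset.univ _ (Finset.mem_univ j)]
        congr 1
        · simp
        · apply Finset.prod_congr rfl
          intro i hi
          have hij : i ≠ j := (Finset.mem_erase.1 hi).1
          rw [Pi.single_apply, if_neg hij, if_pos rfl]
      have hrhs : (∑ i, if (Pi.single j 1 : Fin J → ℕ) = Pi.single i 1 then p i * S else 0)
          = p j * S := by
        have : ∀ i : Fin J, (if (Pi.single j 1 : Fin J → ℕ) = Pi.single i 1 then p i * S else 0)
            = if i = j then p i * S else 0 := by
          intro i; simp only [huniq i]
        rw [Finset.sum_congr rfl (fun i _ => this i),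
          Finset.sum_ite_eq' Finset.univ j (fun i => p i * S), if_pos (Finset.mem_univ j)]
      rw [hsel, hber, hrhs]
      have hw : 1 - ∑ i ∈ Finset.univ.erase j, p i ≤ ∏ i ∈ Finset.univ.erase j, (1 - p i) :=
        weier _ p hp hp1
      have hsub : ∑ i ∈ Finset.univ.erase j, p i ≤ S := by
        rw [hS]
        exact Finset.sum_le_sum_of_subset_of_nonneg (Finset.erase_subset _ _)
          (fun i _ _ => hp i)
      have h1 : p j - p j * ∏ i ∈ Finset.univ.erase j, (1 - p i) ≤ p j * S := by
        have h2 : p j * (1 - ∑ i ∈ Finset.univ.erase j, p i) ≤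
            p j * ∏ i ∈ Finset.univ.erase j, (1 - p i) := by
          exact mul_le_mul_of_nonneg_left hw (hp j)
        nlinarith [hp j]
      exact max_le h1 (mul_nonneg (hp j) hS0)
    · push_neg at hx1
      have hsel : sel p x = 0 := by
        unfold sel
        rw [if_neg hx0, zero_add]
        exact Finset.sum_eq_zero fun i _ => if_neg (hx1 i)
      have hrhs : (∑ i, if x = Pi.single i 1 then p i * S else 0) = 0 :=
        Finset.sum_eq_zero fun i _ => if_neg (hx1 i)
      rw [hsel, hrhs]
      have := hbnn x
      exact max_le (by linarith) le_rfl
  -- assemble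
  have habs : ∀ a b : ℝ, |a - b| = (a - b) + 2 * max (b - a) 0 := by
    intro a b
    rcases le_total a b with h | h
    · rw [abs_of_nonpos (by linarith), max_eq_left (by linarith)]; ring
    · rw [abs_of_nonneg (by linarith), max_eq_right (by linarith)]; ring
  have htsum : (∑' x : Fin J → ℕ, |berProd p x - sel p x|)
      = ∑ x ∈ s, |berProd p x - sel p x| := tsum_eq_sum hoff
  rw [htsum]
  have hsplit : ∑ x ∈ s, |berProd p x - sel p x|
      = ∑ x ∈ s, (berProd p x - sel p x) + 2 * ∑ x ∈ s, max (sel p x - berProd p x) 0 := by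
    rw [Finset.mul_sum, ← Finset.sum_add_distrib]
    exact Finset.sum_congr rfl fun x _ => habs _ _
  have hzero : ∑ x ∈ s, (berProd p x - sel p x) = 0 := by
    rw [Finset.sum_sub_distrib, hbsum, hssum]; ring
  have hbound : ∑ x ∈ s, max (sel p x - berProd p x) 0 ≤ S ^ 2 := by
    calc ∑ x ∈ s, max (sel p x - berProd p x) 0
        ≤ ∑ x ∈ s, ∑ j, if x = Pi.single j 1 then p j * S else 0 :=
          Finset.sum_le_sum hpt
      _ = S ^ 2 := by
          rw [Finset.sum_comm]
          have : ∀ j : Fin J, (∑ x ∈ s, if x = Pi.single j 1 then p j * S else 0)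
              = p j * S := by
            intro j
            rw [Finset.sum_ite_eq' s (Pi.single j 1) (fun _ => p j * S),
              if_pos (single_mem_piFinset j)]
          rw [Finset.sum_congr rfl (fun j _ => this j), ← Finset.sum_mul, ← hS]
          ring
  rw [hsplit, hzero]
  linarith
end

section
/- Let ρ be a probability distribution on [r], and for each u ∈ [r] let q_{u,·} be a subprobability vector on [J]. Then d_TV( sel(Σ_u ρ_u q_{u,·}), Σ_u ρ_u sel^{*m}(q_{u,·}/m) ) ≤ Σ_u ρ_u (Σ_j q_{u,j})², where sel^{*m} denotes the m-fold convolution of sel. -/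
/-- Convolution of two mass functions on `ℤ₊^J`. -/
noncomputable def convOn {J : ℕ} (a b : (Fin J → ℕ) → ℝ) (x : Fin J → ℕ) : ℝ :=
  ∑' y : Fin J → ℕ, ∑' z : Fin J → ℕ, if y + z = x then a y * b z else 0

/-- `sel^{*k}(p)`: the `k`-fold convolution of `sel(p)` (distribution of the sum of `k`
i.i.d. `sel(p)` random vectors). -/
noncomputable def selPow {J : ℕ} (p : Fin J → ℝ) : ℕ → (Fin J → ℕ) → ℝ
  | 0 => fun x => if x = 0 then 1 else 0
  | k + 1 => convOn (selPow p k) (sel p)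

section aux

variable {J : ℕ}

lemma single_ne_zero' (j : Fin J) : (Pi.single j 1 : Fin J → ℕ) ≠ 0 := by
  intro h
  have := congrFun h j
  simp [Pi.single_eq_same] at this

lemma single_inj {j k : Fin J} (h : (Pi.single j 1 : Fin J → ℕ) = Pi.single k 1) : j = k := by
  have h2 := congrFun h j
  rw [Pi.single_eq_same, Pi.single_apply] at h2
  by_contra hjk
  rw [if_neg hjk] at h2
  exact one_ne_zero h2

lemma sel_zero (p : Fin J → ℝ) : sel p 0 = 1 - ∑ j, p j := by
  rw [sel, if_pos rfl,
    Finset.sum_eq_zero (fun j _ => if_neg (fun h => single_ne_zero' j h.symm)), add_zero]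

lemma sel_single (p : Fin J → ℝ) (j : Fin J) : sel p (Pi.single j 1) = p j := by
  rw [sel, if_neg (single_ne_zero' j), zero_add]
  rw [Finset.sum_eq_single j]
  · exact if_pos rfl
  · intro k _ hk
    exact if_neg (fun h => hk ((single_inj h).symm))
  · intro h; exact absurd (Finset.mem_univ j) h

lemma sel_nonneg {p : Fin J → ℝ} (hp : ∀ j, 0 ≤ p j) (hs : ∑ j, p j ≤ 1) (x : Fin J → ℕ) :
    0 ≤ sel p x := by
  rw [sel]
  refine add_nonneg ?_ (Finset.sum_nonneg fun j _ => ?_)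
  · split
    · linarith
    · exact le_refl 0
  · split
    · exact hp j
    · exact le_refl 0

lemma sel_support {p : Fin J → ℝ} {x : Fin J → ℕ} (hx : sel p x ≠ 0) :
    x = 0 ∨ ∃ j, x = Pi.single j 1 := by
  by_contra h
  push_neg at h
  apply hx
  rw [sel, if_neg h.1, Finset.sum_eq_zero (fun j _ => if_neg (h.2 j)), add_zero]

lemma sel_support_le {p : Fin J → ℝ} {x : Fin J → ℕ} (hx : sel p x ≠ 0) :
    x ≤ fun _ => 1 := by
  rcases sel_support hx with rfl | ⟨j, rfl⟩
  · intro i; exact Nat.zero_le _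
  · intro i
    by_cases hij : i = j
    · subst hij
      exact (Pi.single_eq_same i 1).le
    · exact le_trans (Pi.single_eq_of_ne hij 1).le (Nat.zero_le 1)

lemma convOn_eq (a b : (Fin J → ℕ) → ℝ) (x : Fin J → ℕ) :
    convOn a b x = ∑ y ∈ Finset.Iic x, a y * b (x - y) := by
  classical
  rw [convOn]
  have hinner : ∀ y, (∑' z, if y + z = x then a y * b z else 0)
      = if y ≤ x then a y * b (x - y) else 0 := by
    intro y
    by_cases h : y ≤ x
    · rw [if_pos h]
      rw [tsum_eq_single (x - y)]
      · rw [if_pos]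
        funext i
        have h2 : y i ≤ x i := h i
        simp only [Pi.add_apply, Pi.sub_apply]
        omega
      · intro z hz
        rw [if_neg]
        intro hyz
        apply hz
        funext i
        have h1 := congrFun hyz i
        have h2 : y i ≤ x i := h i
        simp only [Pi.add_apply, Pi.sub_apply] at *
        omega
    · rw [if_neg h]
      rw [tsum_congr (g := fun _ => (0:ℝ)) ?_, tsum_zero]
      intro z
      rw [if_neg]
      intro hyz
      exact h (Pi.le_def.mpr fun i => by
        have h1 := congrFun hyz i
        simp only [Pi.add_apply] at h1
        omega)
  rw [tsum_congr hinner]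
  rw [tsum_eq_sum (s := Finset.Iic x)]
  · exact Finset.sum_congr rfl fun y hy => if_pos (Finset.mem_Iic.mp hy)
  · intro y hy
    exact if_neg (fun h => hy (Finset.mem_Iic.mpr h))

lemma convOn_zero (a b : (Fin J → ℕ) → ℝ) : convOn a b 0 = a 0 * b 0 := by
  rw [convOn_eq]
  have : Finset.Iic (0 : Fin J → ℕ) = {0} := by
    ext y
    simp [Finset.mem_Iic, le_zero_iff]
  rw [this, Finset.sum_singleton]
  simp

lemma convOn_single (a b : (Fin J → ℕ) → ℝ) (j : Fin J) :
    convOn a b (Pi.single j 1) = a 0 * b (Pi.single j 1) + a (Pi.single j 1) * b 0 := by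
  rw [convOn_eq]
  have hIic : Finset.Iic (Pi.single j 1 : Fin J → ℕ) = {0, Pi.single j 1} := by
    ext y
    simp only [Finset.mem_Iic, Finset.mem_insert, Finset.mem_singleton]
    constructor
    · intro h
      by_cases hy : y j = 0
      · left
        funext i
        have h2 := h i
        simp only [Pi.single_apply] at h2
        show y i = 0
        by_cases hij : i = j
        · rw [hij]; exact hy
        · rw [if_neg hij] at h2; exact Nat.le_zero.mp h2
      · right
        funext i
        have h2 := h i
        simp only [Pi.single_apply] at h2 ⊢
        by_cases hij : i = j
        · subst hij
          rw [if_pos rfl] at h2 ⊢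
          omega
        · rw [if_neg hij] at h2 ⊢
          exact Nat.le_zero.mp h2
    · rintro (rfl | rfl)
      · intro i; exact Nat.zero_le _
      · exact le_refl _
  rw [hIic]
  rw [Finset.sum_insert (by
    rw [Finset.mem_singleton]
    exact fun h => single_ne_zero' j h.symm)]
  rw [Finset.sum_singleton]
  have e1 : (Pi.single j 1 : Fin J → ℕ) - 0 = Pi.single j 1 := tsub_zero _
  have e2 : (Pi.single j 1 : Fin J → ℕ) - Pi.single j 1 = 0 := tsub_self _
  rw [e1, e2]

lemma selPow_zero' (p : Fin J → ℝ) (k : ℕ) : selPow p k 0 = (1 - ∑ j, p j) ^ k := by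
  induction k with
  | zero => simp [selPow]
  | succ k ih =>
    show convOn (selPow p k) (sel p) 0 = _
    rw [convOn_zero, ih, sel_zero, pow_succ]

lemma selPow_single (p : Fin J → ℝ) (k : ℕ) (j : Fin J) :
    selPow p k (Pi.single j 1) = k * p j * (1 - ∑ i, p i) ^ (k - 1) := by
  induction k with
  | zero =>
    show (if (Pi.single j 1 : Fin J → ℕ) = 0 then (1:ℝ) else 0) = _
    rw [if_neg (single_ne_zero' j)]
    simp
  | succ k ih =>
    show convOn (selPow p k) (sel p) _ = _
    rw [convOn_single, selPow_zero', sel_single, ih, sel_zero]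
    cases k with
    | zero => simp
    | succ n =>
      have h1 : n + 1 - 1 = n := rfl
      have h2 : n + 1 + 1 - 1 = n + 1 := rfl
      rw [h1, h2]
      push_cast
      ring

lemma selPow_nonneg {p : Fin J → ℝ} (hp : ∀ j, 0 ≤ p j) (hs : ∑ j, p j ≤ 1) (k : ℕ)
    (x : Fin J → ℕ) : 0 ≤ selPow p k x := by
  induction k generalizing x with
  | zero =>
    show (0:ℝ) ≤ if x = 0 then 1 else 0
    split <;> norm_num
  | succ k ih =>
    show 0 ≤ convOn (selPow p k) (sel p) x
    rw [convOn_eq]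
    exact Finset.sum_nonneg fun y _ => mul_nonneg (ih y) (sel_nonneg hp hs _)

lemma selPow_support (p : Fin J → ℝ) (k : ℕ) {x : Fin J → ℕ} (hx : selPow p k x ≠ 0) :
    x ≤ fun _ => k := by
  induction k generalizing x with
  | zero =>
    have hx0 : x = 0 := by
      by_contra h
      apply hx
      show (if x = 0 then (1:ℝ) else 0) = 0
      rw [if_neg h]
    intro i
    rw [hx0]
    exact Nat.zero_le _
  | succ k ih =>
    rw [show selPow p (k+1) = convOn (selPow p k) (sel p) from rfl, convOn_eq] at hx
    obtain ⟨y, hy, hne⟩ := Finset.exists_ne_zero_of_sum_ne_zero hx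
    have h1 : selPow p k y ≠ 0 := fun h => hne (by rw [h, zero_mul])
    have h2 : sel p (x - y) ≠ 0 := fun h => hne (by rw [h, mul_zero])
    intro i
    have hxy : y i ≤ x i := Finset.mem_Iic.mp hy i
    have hyk : y i ≤ k := ih h1 i
    have hz1 : x i - y i ≤ 1 := sel_support_le h2 i
    show x i ≤ k + 1
    omega

lemma summable_of_support_le {f : (Fin J → ℕ) → ℝ} {c : Fin J → ℕ}
    (h : ∀ x, f x ≠ 0 → x ≤ c) : Summable f := by
  apply summable_of_finite_support
  apply Set.Finite.subset (Finset.Iic c).finite_toSet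
  intro x hx
  exact Finset.mem_coe.mpr (Finset.mem_Iic.mpr (h x hx))

lemma tsum_convOn {a b : (Fin J → ℕ) → ℝ} {ca cb : Fin J → ℕ}
    (ha : ∀ x, a x ≠ 0 → x ≤ ca) (hb : ∀ x, b x ≠ 0 → x ≤ cb) :
    ∑' x, convOn a b x = (∑' x, a x) * (∑' x, b x) := by
  classical
  have hsupp : ∀ y x : Fin J → ℕ, (if y ≤ x then a y * b (x - y) else 0) ≠ 0 →
      y ≤ ca ∧ x ≤ ca + cb := by
    intro y x h
    by_cases hyx : y ≤ x
    · rw [if_pos hyx] at h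
      have h1 : a y ≠ 0 := fun hh => h (by rw [hh, zero_mul])
      have h2 : b (x - y) ≠ 0 := fun hh => h (by rw [hh, mul_zero])
      have hy := ha y h1
      have hz := hb _ h2
      refine ⟨hy, fun i => ?_⟩
      have e1 : x i - y i ≤ cb i := hz i
      have e2 : y i ≤ ca i := hy i
      have e3 : y i ≤ x i := hyx i
      show x i ≤ ca i + cb i
      omega
    · rw [if_neg hyx] at h
      exact absurd rfl h
  have hunc : Summable (Function.uncurry
      (fun y x : Fin J → ℕ => if y ≤ x then a y * b (x - y) else 0)) := by
    apply summable_of_finite_support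
    apply Set.Finite.subset ((Finset.Iic ca ×ˢ Finset.Iic (ca + cb)).finite_toSet)
    rintro ⟨y, x⟩ hx
    have := hsupp y x hx
    simp only [Finset.coe_product, Set.mem_prod, Finset.mem_coe, Finset.mem_Iic]
    exact this
  have hrow : ∀ y, Summable (fun x : Fin J → ℕ => if y ≤ x then a y * b (x - y) else 0) :=
    fun y => summable_of_support_le (c := ca + cb) (fun x hx => (hsupp y x hx).2)
  have hcol : ∀ x, Summable (fun y : Fin J → ℕ => if y ≤ x then a y * b (x - y) else 0) :=
    fun x => summable_of_support_le (c := ca) (fun y hy => (hsupp y x hy).1)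
  have hconv : ∀ x, convOn a b x = ∑' y, if y ≤ x then a y * b (x - y) else 0 := by
    intro x
    rw [convOn_eq, (tsum_eq_sum (s := Finset.Iic x) ?_)]
    · exact Finset.sum_congr rfl fun y hy => (if_pos (Finset.mem_Iic.mp hy)).symm
    · intro y hy
      exact if_neg (fun h => hy (Finset.mem_Iic.mpr h))
  calc ∑' x, convOn a b x
      = ∑' x, ∑' y, if y ≤ x then a y * b (x - y) else 0 := tsum_congr hconv
    _ = ∑' y, ∑' x, if y ≤ x then a y * b (x - y) else 0 := Summable.tsum_comm' hunc hrow hcol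
    _ = ∑' y, a y * ∑' z, b z := by
        apply tsum_congr
        intro y
        rw [← tsum_mul_left]
        have hinj : Function.Injective (fun z : Fin J → ℕ => y + z) := by
          intro z1 z2 h
          funext i
          have := congrFun h i
          simp only [Pi.add_apply] at this
          omega
        have hsub : Function.support (fun x : Fin J → ℕ => if y ≤ x then a y * b (x - y) else 0)
            ⊆ Set.range (fun z : Fin J → ℕ => y + z) := by
          intro x hx
          rw [Function.mem_support] at hx
          by_cases hyx : y ≤ x
          · refine ⟨x - y, funext fun i => ?_⟩
            have e3 : y i ≤ x i := hyx i
            simp only [Pi.add_apply, Pi.sub_apply]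
            omega
          · rw [if_neg hyx] at hx
            exact absurd rfl hx
        calc (∑' x, if y ≤ x then a y * b (x - y) else 0)
            = ∑' z, if y ≤ y + z then a y * b (y + z - y) else 0 :=
              (Function.Injective.tsum_eq hinj hsub).symm
          _ = ∑' z, a y * b z := by
              apply tsum_congr
              intro z
              have hle : y ≤ y + z := Pi.le_def.mpr fun i => Nat.le_add_right _ _
              rw [if_pos hle]
              have e4 : y + z - y = z := by
                funext i
                simp only [Pi.add_apply, Pi.sub_apply]
                omega
              rw [e4]
    _ = (∑' x, a x) * ∑' z, b z := tsum_mul_right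

lemma tsum_sel (p : Fin J → ℝ) : ∑' x, sel p x = 1 := by
  classical
  rw [tsum_eq_sum (s := insert 0 (Finset.image (fun j => (Pi.single j 1 : Fin J → ℕ))
      Finset.univ)) ?_]
  · rw [Finset.sum_insert ?_]
    · rw [Finset.sum_image ?_]
      · rw [sel_zero]
        rw [Finset.sum_congr rfl (fun j _ => sel_single p j)]
        ring
      · intro j _ k _ h
        exact single_inj h
    · intro hmem
      rw [Finset.mem_image] at hmem
      obtain ⟨j, -, h⟩ := hmem
      exact single_ne_zero' j h
  · intro x hx
    by_contra h
    apply hx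
    rcases sel_support h with rfl | ⟨j, rfl⟩
    · exact Finset.mem_insert_self _ _
    · exact Finset.mem_insert_of_mem (Finset.mem_image.mpr ⟨j, Finset.mem_univ j, rfl⟩)

lemma tsum_selPow (p : Fin J → ℝ) (k : ℕ) : ∑' x, selPow p k x = 1 := by
  induction k with
  | zero => exact tsum_ite_eq (0 : Fin J → ℕ) (fun _ => (1 : ℝ))
  | succ k ih =>
    show ∑' x, convOn (selPow p k) (sel p) x = 1
    rw [tsum_convOn (fun x hx => selPow_support p k hx) (fun x hx => sel_support_le hx),
      ih, tsum_sel, one_mul]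

end aux

/-- If `ρ` is a probability distribution on `[r]` and each `q u` is a subprobability
vector on `[J]`, then
`d_TV(sel(∑_u ρ_u q_{u,·}), ∑_u ρ_u sel^{*m}(q_{u,·}/m)) ≤ ∑_u ρ_u (∑_j q_{u,j})²`. -/
theorem stmt_10 {r J : ℕ} (m : ℕ) (hm : 1 ≤ m)
    (ρ : Fin r → ℝ) (hρ : ∀ u, 0 ≤ ρ u) (hρs : ∑ u, ρ u = 1)
    (q : Fin r → Fin J → ℝ) (hq : ∀ u j, 0 ≤ q u j) (hqs : ∀ u, ∑ j, q u j ≤ 1) :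
    (1 / 2) * ∑' x : Fin J → ℕ,
        |sel (fun j => ∑ u, ρ u * q u j) x - ∑ u, ρ u * selPow (fun j => q u j / m) m x|
      ≤ ∑ u, ρ u * (∑ j, q u j) ^ 2 := by
  classical
  have hm' : (1:ℝ) ≤ (m:ℝ) := by exact_mod_cast hm
  have hm0 : (0:ℝ) < (m:ℝ) := by linarith
  have hcan : ∀ a : ℝ, (m:ℝ) * (a / m) = a := fun a => by field_simp
  have hS0 : ∀ u, 0 ≤ ∑ j, q u j := fun u => Finset.sum_nonneg fun j _ => hq u j
  have hPsum : ∀ u, ∑ j, q u j / (m:ℝ) = (∑ j, q u j) / m := fun u => (Finset.sum_div _ _ _).symm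
  have hP0 : ∀ u, ∀ j, 0 ≤ q u j / (m:ℝ) := fun u j => div_nonneg (hq u j) hm0.le
  have hPs1 : ∀ u, ∑ j, q u j / (m:ℝ) ≤ 1 := by
    intro u
    rw [hPsum u, div_le_one hm0]
    linarith [hqs u]
  have hBern : ∀ (n : ℕ) u, 1 - (n:ℝ) * ((∑ j, q u j)/m) ≤ (1 - (∑ j, q u j)/m) ^ n := by
    intro n u
    have hd1 : (∑ j, q u j)/(m:ℝ) ≤ 1 := by rw [div_le_one hm0]; linarith [hqs u]
    have hd0 : 0 ≤ (∑ j, q u j)/(m:ℝ) := div_nonneg (hS0 u) hm0.le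
    have h2 : (-2:ℝ) ≤ -((∑ j, q u j)/m) := by linarith
    have h3 := one_add_mul_le_pow h2 n
    have h4 : (1:ℝ) + -((∑ j, q u j)/m) = 1 - (∑ j, q u j)/m := by ring
    rw [h4] at h3
    linarith
  set μ : (Fin J → ℕ) → ℝ := sel (fun j => ∑ u, ρ u * q u j) with hμdef
  set ν : (Fin J → ℕ) → ℝ := fun x => ∑ u, ρ u * selPow (fun j => q u j / (m:ℝ)) m x
    with hνdef
  show (1/2) * (∑' x, |μ x - ν x|) ≤ ∑ u, ρ u * (∑ j, q u j) ^ 2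
  have hνnn : ∀ x, 0 ≤ ν x := fun x => Finset.sum_nonneg fun u _ =>
    mul_nonneg (hρ u) (selPow_nonneg (hP0 u) (hPs1 u) m x)
  have hμ0 : μ 0 = 1 - ∑ j, ∑ u, ρ u * q u j := sel_zero _
  have hμe : ∀ j, μ (Pi.single j 1) = ∑ u, ρ u * q u j := fun j => sel_single _ j
  have hν0 : ν 0 = ∑ u, ρ u * (1 - (∑ j, q u j)/m)^m := by
    show ∑ u, ρ u * selPow (fun j => q u j / (m:ℝ)) m 0 = _
    refine Finset.sum_congr rfl fun u _ => ?_
    simp only [selPow_zero']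
    rw [hPsum u]
  have hνe : ∀ j, ν (Pi.single j 1)
      = ∑ u, ρ u * (q u j * (1 - (∑ i, q u i)/m)^(m-1)) := by
    intro j
    show ∑ u, ρ u * selPow (fun j => q u j / (m:ℝ)) m (Pi.single j 1) = _
    refine Finset.sum_congr rfl fun u _ => ?_
    simp only [selPow_single]
    rw [hPsum u, hcan (q u j)]
  have hselPowSummable : ∀ u, Summable (fun x => selPow (fun j => q u j / (m:ℝ)) m x) :=
    fun u => summable_of_support_le (c := fun _ => m) (fun x hx => selPow_support _ m hx)
  have hμsum : Summable μ :=
    summable_of_support_le (c := fun _ => 1) (fun x hx => sel_support_le hx)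
  have hνsum : Summable ν :=
    summable_sum (fun u _ => (hselPowSummable u).mul_left (ρ u))
  have hμtot : ∑' x, μ x = 1 := tsum_sel _
  have hνtot : ∑' x, ν x = 1 := by
    show ∑' x, ∑ u, ρ u * selPow (fun j => q u j / (m:ℝ)) m x = 1
    rw [Summable.tsum_finsetSum (fun u _ => (hselPowSummable u).mul_left (ρ u))]
    calc ∑ u, ∑' x, ρ u * selPow (fun j => q u j / (m:ℝ)) m x
        = ∑ u, ρ u := by
          refine Finset.sum_congr rfl fun u _ => ?_
          rw [tsum_mul_left, tsum_selPow, mul_one]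
      _ = 1 := hρs
  set pos : (Fin J → ℕ) → ℝ := fun x => max (μ x - ν x) 0 with hposdef
  have hpos_eval : ∀ x, pos x = max (μ x - ν x) 0 := fun x => rfl
  have hpos_supp : ∀ x, pos x ≠ 0 → x ≤ fun _ => 1 := by
    intro x hx
    have hμx : μ x ≠ 0 := by
      intro h0
      apply hx
      rw [hpos_eval, h0, zero_sub, max_eq_right (neg_nonpos.mpr (hνnn x))]
    exact sel_support_le hμx
  have hpossum : Summable pos := summable_of_support_le hpos_supp
  have habs : ∀ x, |μ x - ν x| = 2 * pos x - (μ x - ν x) := by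
    intro x
    rw [hpos_eval]
    rcases le_total (μ x - ν x) 0 with h | h
    · rw [abs_of_nonpos h, max_eq_right h]; ring
    · rw [abs_of_nonneg h, max_eq_left h]; ring
  have hsum2 : ∑' x, |μ x - ν x| = 2 * ∑' x, pos x := by
    rw [tsum_congr habs,
      Summable.tsum_sub (hpossum.mul_left 2) (hμsum.sub hνsum),
      tsum_mul_left,
      Summable.tsum_sub hμsum hνsum, hμtot, hνtot]
    ring
  have hvanish : ∀ x ∉ insert (0 : Fin J → ℕ)
      (Finset.image (fun j => (Pi.single j 1 : Fin J → ℕ)) Finset.univ), pos x = 0 := by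
    intro x hx
    by_contra h
    apply hx
    have hμx : μ x ≠ 0 := by
      intro h0
      apply h
      rw [hpos_eval, h0, zero_sub, max_eq_right (neg_nonpos.mpr (hνnn x))]
    rcases sel_support hμx with rfl | ⟨j, rfl⟩
    · exact Finset.mem_insert_self _ _
    · exact Finset.mem_insert_of_mem (Finset.mem_image.mpr ⟨j, Finset.mem_univ j, rfl⟩)
  have hne0 : (0 : Fin J → ℕ) ∉
      Finset.image (fun j => (Pi.single j 1 : Fin J → ℕ)) Finset.univ := by
    intro hmem
    rw [Finset.mem_image] at hmem
    obtain ⟨j, -, h⟩ := hmem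
    exact single_ne_zero' j h
  have hposeval : ∑' x, pos x = pos 0 + ∑ j, pos (Pi.single j 1) := by
    rw [tsum_eq_sum hvanish, Finset.sum_insert hne0,
      Finset.sum_image (fun j _ k _ h => single_inj h)]
  have hpos0 : pos 0 = 0 := by
    rw [hpos_eval]
    apply max_eq_right
    rw [hμ0, hν0]
    have hswap : ∑ j, ∑ u, ρ u * q u j = ∑ u, ρ u * ∑ j, q u j := by
      rw [Finset.sum_comm]
      exact Finset.sum_congr rfl fun u _ => (Finset.mul_sum _ _ _).symm
    rw [hswap]
    have key : ∑ u, ρ u * (1 - ∑ j, q u j) ≤ ∑ u, ρ u * (1 - (∑ j, q u j)/m)^m := by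
      refine Finset.sum_le_sum fun u _ => ?_
      refine mul_le_mul_of_nonneg_left ?_ (hρ u)
      have h3 := hBern m u
      have h4 : (m:ℝ) * ((∑ j, q u j)/m) = ∑ j, q u j := hcan _
      linarith
    have expand : ∑ u, ρ u * (1 - ∑ j, q u j) = 1 - ∑ u, ρ u * ∑ j, q u j := by
      have e1 : ∑ u, ρ u * (1 - ∑ j, q u j) = ∑ u, (ρ u - ρ u * ∑ j, q u j) :=
        Finset.sum_congr rfl fun u _ => by ring
      rw [e1, Finset.sum_sub_distrib, hρs]
    rw [← expand]
    linarith [key]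
  have hposj : ∀ j, pos (Pi.single j 1) ≤ ∑ u, ρ u * (q u j * ∑ i, q u i) := by
    intro j
    rw [hpos_eval]
    apply max_le
    · rw [hμe j, hνe j, ← Finset.sum_sub_distrib]
      refine Finset.sum_le_sum fun u _ => ?_
      have hB : 1 - (∑ i, q u i) ≤ (1 - (∑ i, q u i)/m)^(m-1) := by
        have h3 := hBern (m-1) u
        have hc : ((m - 1 : ℕ) : ℝ) = (m:ℝ) - 1 := by
          rw [Nat.cast_sub hm, Nat.cast_one]
        have h5 : ((m:ℝ) - 1) * ((∑ i, q u i)/m) = (∑ i, q u i) - (∑ i, q u i)/m := by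
          field_simp
        have h6 : 0 ≤ (∑ i, q u i)/(m:ℝ) := div_nonneg (hS0 u) hm0.le
        rw [hc] at h3
        linarith
      have hq0 : 0 ≤ ρ u * q u j := mul_nonneg (hρ u) (hq u j)
      have h7 : 0 ≤ (ρ u * q u j)
          * ((∑ i, q u i) - (1 - (1 - (∑ i, q u i)/m)^(m-1))) :=
        mul_nonneg hq0 (by linarith)
      nlinarith [h7]
    · exact Finset.sum_nonneg fun u _ => mul_nonneg (hρ u)
        (mul_nonneg (hq u j) (hS0 u))
  have hfinal : ∑ j, ∑ u, ρ u * (q u j * ∑ i, q u i) = ∑ u, ρ u * (∑ j, q u j)^2 := by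
    rw [Finset.sum_comm]
    refine Finset.sum_congr rfl fun u _ => ?_
    rw [← Finset.mul_sum, ← Finset.sum_mul]
    ring
  calc (1/2) * (∑' x, |μ x - ν x|) = ∑' x, pos x := by rw [hsum2]; ring
    _ = pos 0 + ∑ j, pos (Pi.single j 1) := hposeval
    _ ≤ 0 + ∑ j, ∑ u, ρ u * (q u j * ∑ i, q u i) :=
        add_le_add (le_of_eq hpos0) (Finset.sum_le_sum fun j _ => hposj j)
    _ = ∑ u, ρ u * (∑ j, q u j)^2 := by rw [zero_add, hfinal]
end

section
/- Let y be a positive integer, t ≥ 1, ρ a probability distribution on [r], θ_{u,v} > 0, θ_v* > 0, and θ_v := Σ_u ρ_u θ_{u,v}. Assume θ_{u,v} y / (mt) ≤ 1 for all u, θ_v y / t ≤ 1, and θ_v* y / t ≤ 1. Then d_TV( Σ_u ρ_u binom(m, θ_{u,v} y/(mt)), Ber(θ_v* y / t) ) ≤ θ_max² y² / t² + |θ_v - θ_v*| y / t, where θ_max = max_{u,v} θ_{u,v}. -/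
/-- The binomial distribution with `m` trials and success probability `p`. -/
noncomputable def binomPMF (m : ℕ) (p : ℝ) (k : ℕ) : ℝ :=
  if k ≤ m then (Nat.choose m k : ℝ) * p ^ k * (1 - p) ^ (m - k) else 0

lemma binomPMF_nonneg (m : ℕ) {p : ℝ} (hp0 : 0 ≤ p) (hp1 : p ≤ 1) (k : ℕ) :
    0 ≤ binomPMF m p k := by
  unfold binomPMF
  have h1p : (0:ℝ) ≤ 1 - p := by linarith
  split
  · positivity
  · exact le_refl 0

lemma binomPMF_sum (m : ℕ) (p : ℝ) :
    ∑ k ∈ Finset.range (m+1), binomPMF m p k = 1 := by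
  have h : ∀ k ∈ Finset.range (m+1),
      binomPMF m p k = p ^ k * (1 - p) ^ (m - k) * (m.choose k : ℝ) := by
    intro k hk
    rw [Finset.mem_range] at hk
    unfold binomPMF
    rw [if_pos (by omega)]
    ring
  rw [Finset.sum_congr rfl h, ← add_pow]
  norm_num

lemma tv_binom (m : ℕ) (hm : 1 ≤ m) {p : ℝ} (hp0 : 0 ≤ p) (hp1 : p ≤ 1) :
    ∑ k ∈ Finset.range (m+1), |binomPMF m p k - bern ((m:ℝ) * p) k|
      ≤ 2 * ((m:ℝ) * p)^2 := by
  have h1p : (0:ℝ) ≤ 1 - p := by linarith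
  have hmp : (0:ℝ) ≤ (m:ℝ) * p := by positivity
  have hb0 : binomPMF m p 0 = (1 - p)^m := by simp [binomPMF]
  have hb1 : binomPMF m p 1 = (m:ℝ) * p * (1 - p)^(m-1) := by
    unfold binomPMF
    rw [if_pos hm]
    simp
  have hber1 : 1 - (m:ℝ)*p ≤ (1-p)^m := by
    have := one_add_mul_le_pow (show (-2:ℝ) ≤ -p by linarith) m
    simpa [sub_eq_add_neg, mul_neg] using this
  have hber2 : 1 - ((m:ℝ)-1)*p ≤ (1-p)^(m-1) := by
    have := one_add_mul_le_pow (show (-2:ℝ) ≤ -p by linarith) (m-1)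
    have hc : ((m-1 : ℕ) : ℝ) = (m:ℝ) - 1 := by
      rw [Nat.cast_sub hm]; norm_num
    rw [hc] at this
    have h2 : (1 + -p) = 1 - p := by ring
    rw [h2] at this
    linarith
  have hpow1 : (1-p)^(m-1) ≤ 1 := pow_le_one₀ h1p (by linarith)
  -- decompose the sum
  rw [Finset.range_eq_Ico, Finset.sum_eq_sum_Ico_succ_bot (by omega),
    Finset.sum_eq_sum_Ico_succ_bot (by omega)]
  have htail : ∑ k ∈ Finset.Ico 2 (m+1), |binomPMF m p k - bern ((m:ℝ)*p) k|
      = 1 - binomPMF m p 0 - binomPMF m p 1 := by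
    have heq : ∀ k ∈ Finset.Ico 2 (m+1),
        |binomPMF m p k - bern ((m:ℝ)*p) k| = binomPMF m p k := by
      intro k hk
      rw [Finset.mem_Ico] at hk
      have h0 : k ≠ 0 := by omega
      have h1 : k ≠ 1 := by omega
      rw [bern, if_neg h0, if_neg h1, sub_zero,
        abs_of_nonneg (binomPMF_nonneg m hp0 hp1 k)]
    rw [Finset.sum_congr rfl heq]
    have := binomPMF_sum m p
    rw [Finset.range_eq_Ico, Finset.sum_eq_sum_Ico_succ_bot (by omega : 0 < m+1),
      Finset.sum_eq_sum_Ico_succ_bot (by omega : 1 < m+1)] at this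
    linarith
  rw [htail]
  have hbern0 : bern ((m:ℝ)*p) 0 = 1 - (m:ℝ)*p := by simp [bern]
  have hbern1 : bern ((m:ℝ)*p) 1 = (m:ℝ)*p := by simp [bern]
  rw [hbern0, hbern1, hb0, hb1]
  rw [abs_of_nonneg (by linarith : (0:ℝ) ≤ (1-p)^m - (1 - (m:ℝ)*p)),
    abs_of_nonpos (by nlinarith : (m:ℝ)*p*(1-p)^(m-1) - (m:ℝ)*p ≤ 0)]
  nlinarith [mul_le_mul_of_nonneg_left hber2 hmp,
    mul_nonneg (Nat.cast_nonneg m) (mul_nonneg hp0 hp0)]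

lemma tv_bern (m : ℕ) (hm : 1 ≤ m) (b q : ℝ) :
    ∑ k ∈ Finset.range (m+1), |bern b k - bern q k| ≤ 2 * |b - q| := by
  rw [Finset.range_eq_Ico, Finset.sum_eq_sum_Ico_succ_bot (by omega),
    Finset.sum_eq_sum_Ico_succ_bot (by omega)]
  have h2 : ∑ k ∈ Finset.Ico 2 (m+1), |bern b k - bern q k| = 0 := by
    apply Finset.sum_eq_zero
    intro k hk
    rw [Finset.mem_Ico] at hk
    have h0 : k ≠ 0 := by omega
    have h1 : k ≠ 1 := by omega
    simp [bern, h0, h1]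
  rw [h2]
  have e0 : bern b 0 - bern q 0 = -(b - q) := by simp [bern]
  have e1 : bern b 1 - bern q 1 = b - q := by simp [bern]
  rw [e0, e1, abs_neg]
  linarith

lemma mix_bern {r : ℕ} (ρ : Fin r → ℝ) (hρs : ∑ u, ρ u = 1) (a : Fin r → ℝ) (k : ℕ) :
    ∑ u, ρ u * bern (a u) k = bern (∑ u, ρ u * a u) k := by
  rcases k with _|_|k <;> simp [bern, mul_sub, Finset.sum_sub_distrib, hρs]

/-- Bound on the total variation distance between a mixture of binomial distributions
`∑_u ρ_u binom(m, θ_{u,v} y/(mt))` and `Ber(θ*_v y/t)`. -/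
theorem stmt_11 {r : ℕ} (m y : ℕ) (hm : 1 ≤ m) (hy : 0 < y) (t : ℝ) (ht : 1 ≤ t)
    (ρ : Fin r → ℝ) (hρ : ∀ u, 0 ≤ ρ u) (hρs : ∑ u, ρ u = 1)
    (θ : Fin r → Fin r → ℝ) (hθ : ∀ u w, 0 < θ u w)
    (θstar : Fin r → ℝ) (hθstar : ∀ w, 0 < θstar w)
    (θmax : ℝ) (hθmax : ∀ u w, θ u w ≤ θmax)
    (v : Fin r)
    (h1 : ∀ u, θ u v * y / (m * t) ≤ 1)
    (h2 : (∑ u, ρ u * θ u v) * y / t ≤ 1)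
    (h3 : θstar v * y / t ≤ 1) :
    (1 / 2) * ∑' k : ℕ,
        |(∑ u, ρ u * binomPMF m (θ u v * y / (m * t)) k) - bern (θstar v * y / t) k|
      ≤ θmax ^ 2 * (y : ℝ) ^ 2 / t ^ 2 + |(∑ u, ρ u * θ u v) - θstar v| * y / t := by
  have ht0 : (0:ℝ) < t := lt_of_lt_of_le one_pos ht
  have hy0 : (0:ℝ) < (y:ℝ) := by exact_mod_cast hy
  have hm0 : (0:ℝ) < (m:ℝ) := by exact_mod_cast hm
  set q := θstar v * (y:ℝ) / t with hq
  set b := (∑ u, ρ u * θ u v) * (y:ℝ) / t with hb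
  have hpnn : ∀ u : Fin r, 0 ≤ θ u v * (y:ℝ) / (m * t) := by
    intro u
    have := (hθ u v).le
    positivity
  have hmp : ∀ u : Fin r, (m:ℝ) * (θ u v * y / (m * t)) = θ u v * y / t := by
    intro u
    field_simp
  -- restrict the tsum to a finite range
  have hsupp : ∀ k ∉ Finset.range (m+1),
      |(∑ u, ρ u * binomPMF m (θ u v * y / (m * t)) k) - bern q k| = 0 := by
    intro k hk
    rw [Finset.mem_range, not_lt] at hk
    have hkm : ¬ k ≤ m := by omega
    have h0 : k ≠ 0 := by omega
    have h1' : k ≠ 1 := by omega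
    simp [binomPMF, bern, hkm, h0, h1']
  rw [tsum_eq_sum hsupp]
  -- pointwise bound
  have hmix : ∀ k, ∑ u, ρ u * bern (θ u v * (y:ℝ) / t) k = bern b k := by
    intro k
    rw [mix_bern ρ hρs (fun u => θ u v * (y:ℝ) / t) k]
    congr 1
    rw [hb, Finset.sum_mul, Finset.sum_div]
    exact Finset.sum_congr rfl fun u _ => by ring
  have hpoint : ∀ k ∈ Finset.range (m+1),
      |(∑ u, ρ u * binomPMF m (θ u v * y / (m*t)) k) - bern q k|
      ≤ (∑ u, ρ u * |binomPMF m (θ u v * y / (m*t)) k - bern (θ u v * (y:ℝ) / t) k|)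
        + |bern b k - bern q k| := by
    intro k _
    have key : (∑ u, ρ u * binomPMF m (θ u v * y / (m*t)) k) - bern q k
        = (∑ u, ρ u * (binomPMF m (θ u v * y / (m*t)) k - bern (θ u v * (y:ℝ) / t) k))
          + (bern b k - bern q k) := by
      simp only [mul_sub, Finset.sum_sub_distrib, hmix k]
      ring
    rw [key]
    refine (abs_add_le _ _).trans (add_le_add_left ?_ _)
    refine (Finset.abs_sum_le_sum_abs _ _).trans (le_of_eq ?_)
    exact Finset.sum_congr rfl fun u _ => by rw [abs_mul, abs_of_nonneg (hρ u)]
  have hstep1 : ∑ k ∈ Finset.range (m+1),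
        |(∑ u, ρ u * binomPMF m (θ u v * y / (m*t)) k) - bern q k|
      ≤ (∑ u, ρ u * ∑ k ∈ Finset.range (m+1),
          |binomPMF m (θ u v * y / (m*t)) k - bern (θ u v * (y:ℝ) / t) k|)
        + ∑ k ∈ Finset.range (m+1), |bern b k - bern q k| := by
    calc ∑ k ∈ Finset.range (m+1), |(∑ u, ρ u * binomPMF m (θ u v * y / (m*t)) k) - bern q k|
        ≤ ∑ k ∈ Finset.range (m+1),
            ((∑ u, ρ u * |binomPMF m (θ u v * y / (m*t)) k - bern (θ u v * (y:ℝ) / t) k|)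
              + |bern b k - bern q k|) := Finset.sum_le_sum hpoint
      _ = (∑ u, ρ u * ∑ k ∈ Finset.range (m+1),
            |binomPMF m (θ u v * y / (m*t)) k - bern (θ u v * (y:ℝ) / t) k|)
          + ∑ k ∈ Finset.range (m+1), |bern b k - bern q k| := by
        rw [Finset.sum_add_distrib, Finset.sum_comm]
        simp [Finset.mul_sum]
  -- bound each binomial term
  have hbin : ∀ u : Fin r, ∑ k ∈ Finset.range (m+1),
      |binomPMF m (θ u v * y / (m*t)) k - bern (θ u v * (y:ℝ) / t) k|
      ≤ 2 * (θmax^2 * (y:ℝ)^2 / t^2) := by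
    intro u
    have h := tv_binom m hm (hpnn u) (h1 u)
    rw [hmp u] at h
    refine h.trans ?_
    have h0 : 0 ≤ θ u v := (hθ u v).le
    have hsq : θ u v ^ 2 ≤ θmax ^ 2 := by nlinarith [hθ u v, hθmax u v]
    have he : (θ u v * (y:ℝ) / t)^2 = θ u v^2 * (y:ℝ)^2 / t^2 := by ring
    rw [he]
    have : θ u v^2 * (y:ℝ)^2 / t^2 ≤ θmax^2 * (y:ℝ)^2 / t^2 := by
      apply div_le_div_of_nonneg_right ?_ (pow_pos ht0 2).le
      exact mul_le_mul_of_nonneg_right hsq (sq_nonneg _)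
    linarith
  have hsum2 : ∑ u, ρ u * ∑ k ∈ Finset.range (m+1),
      |binomPMF m (θ u v * y / (m*t)) k - bern (θ u v * (y:ℝ) / t) k|
      ≤ 2 * (θmax^2 * (y:ℝ)^2 / t^2) := by
    calc ∑ u, ρ u * ∑ k ∈ Finset.range (m+1),
          |binomPMF m (θ u v * y / (m*t)) k - bern (θ u v * (y:ℝ) / t) k|
        ≤ ∑ u, ρ u * (2 * (θmax^2 * (y:ℝ)^2 / t^2)) :=
          Finset.sum_le_sum fun u _ => mul_le_mul_of_nonneg_left (hbin u) (hρ u)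
      _ = 2 * (θmax^2 * (y:ℝ)^2 / t^2) := by
          rw [← Finset.sum_mul, hρs, one_mul]
  have hbq : |b - q| = |(∑ u, ρ u * θ u v) - θstar v| * (y:ℝ) / t := by
    rw [hb, hq]
    have he : (∑ u, ρ u * θ u v) * (y:ℝ) / t - θstar v * (y:ℝ) / t
        = ((∑ u, ρ u * θ u v) - θstar v) * ((y:ℝ) / t) := by ring
    rw [he, abs_mul, abs_of_nonneg (div_nonneg hy0.le ht0.le), mul_div_assoc]
  have hbern := tv_bern m hm b q
  rw [hbq] at hbern
  have := hstep1.trans (add_le_add hsum2 hbern)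
  linarith
end

section
/- Let f : [0,∞) → (0,∞) be nondecreasing and suppose for some ϑ > 0 that (f(S) - f(0)) / ∫₀^S f(u) du → ϑ as S → ∞. Then (ln f(S))/S → ϑ as S → ∞. -/
open Filter MeasureTheory

private lemma my_hasDeriv_phi (F : ℝ → ℝ) (hF : Continuous F) (T c K : ℝ) (s : ℝ) :
    HasDerivAt (fun s => Real.exp (-(c*s)) * (c * (∫ u in T..s, F u) + K))
      (Real.exp (-(c*s)) * (c * F s - c * (c * (∫ u in T..s, F u) + K))) s := by
  have hG : HasDerivAt (fun s => ∫ u in T..s, F u) (F s) s :=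
    intervalIntegral.integral_hasDerivAt_right (hF.intervalIntegrable _ _)
      hF.aestronglyMeasurable.stronglyMeasurableAtFilter hF.continuousAt
  have h0 : HasDerivAt (fun x : ℝ => -(c*x)) (-c) s := by
    exact (((hasDerivAt_id s).const_mul c).neg).congr_deriv (by ring)
  have h1 : HasDerivAt (fun x : ℝ => Real.exp (-(c*x))) (Real.exp (-(c*s)) * (-c)) s :=
    (Real.hasDerivAt_exp _).comp s h0
  have h2 := h1.mul ((hG.const_mul c).add_const K)
  exact h2.congr_deriv (by ring)

private lemma my_gronwall_le (F : ℝ → ℝ) (hF : Continuous F) (T c : ℝ) (hc : 0 < c)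
    (hineq : ∀ S, T ≤ S → F S ≤ F T + c * ∫ u in T..S, F u) :
    ∀ S, T ≤ S → F S ≤ F T * Real.exp (c * (S - T)) := by
  intro S hS
  set φ : ℝ → ℝ := fun s => Real.exp (-(c*s)) * (c * (∫ u in T..s, F u) + F T) with hφdef
  have hφd := my_hasDeriv_phi F hF T c (F T)
  have hanti : AntitoneOn φ (Set.Ici T) := by
    apply antitoneOn_of_deriv_nonpos (convex_Ici T)
    · exact fun x _ => ((hφd x).continuousAt).continuousWithinAt
    · intro x _
      exact ((hφd x).differentiableAt).differentiableWithinAt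
    · intro x hx
      rw [(hφd x).deriv]
      have hx' : T ≤ x := le_of_lt (by simpa using hx)
      have h := hineq x hx'
      have hexp := Real.exp_pos (-(c*x))
      have hsign : c * F x - c * ((c * ∫ u in T..x, F u) + F T) ≤ 0 := by nlinarith
      exact mul_nonpos_of_nonneg_of_nonpos hexp.le hsign
  have hφineq : φ S ≤ φ T := hanti Set.self_mem_Ici hS hS
  have hGT : (∫ u in T..T, F u) = 0 := intervalIntegral.integral_same
  have h1 : c * (∫ u in T..S, F u) + F T ≤ Real.exp (c * (S - T)) * F T := by
    have h := mul_le_mul_of_nonneg_left hφineq (Real.exp_pos (c*S)).le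
    rw [hφdef] at h
    simp only [hGT, mul_zero, zero_add] at h
    rw [← mul_assoc, ← Real.exp_add, ← mul_assoc, ← Real.exp_add] at h
    have e1 : c * S + -(c * S) = 0 := by ring
    have e2 : c * S + -(c * T) = c * (S - T) := by ring
    rw [e1, e2, Real.exp_zero, one_mul] at h
    exact h
  have h2 := hineq S hS
  nlinarith [h1, h2]

private lemma my_gronwall_ge (F : ℝ → ℝ) (hF : Continuous F) (T c : ℝ) (hc : 0 < c)
    (hineq : ∀ S, T ≤ S → F T + c * ∫ u in T..S, F u ≤ F S) :
    ∀ S, T ≤ S → F T * Real.exp (c * (S - T)) ≤ F S := by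
  intro S hS
  set φ : ℝ → ℝ := fun s => Real.exp (-(c*s)) * (c * (∫ u in T..s, F u) + F T) with hφdef
  have hφd := my_hasDeriv_phi F hF T c (F T)
  have hmono : MonotoneOn φ (Set.Ici T) := by
    apply monotoneOn_of_deriv_nonneg (convex_Ici T)
    · exact fun x _ => ((hφd x).continuousAt).continuousWithinAt
    · intro x _
      exact ((hφd x).differentiableAt).differentiableWithinAt
    · intro x hx
      rw [(hφd x).deriv]
      have hx' : T ≤ x := le_of_lt (by simpa using hx)
      have h := hineq x hx'
      have hexp := Real.exp_pos (-(c*x))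
      have hsign : 0 ≤ c * F x - c * ((c * ∫ u in T..x, F u) + F T) := by nlinarith
      exact mul_nonneg hexp.le hsign
  have hφineq : φ T ≤ φ S := hmono Set.self_mem_Ici hS hS
  have hGT : (∫ u in T..T, F u) = 0 := intervalIntegral.integral_same
  have h1 : Real.exp (c * (S - T)) * F T ≤ c * (∫ u in T..S, F u) + F T := by
    have h := mul_le_mul_of_nonneg_left hφineq (Real.exp_pos (c*S)).le
    rw [hφdef] at h
    simp only [hGT, mul_zero, zero_add] at h
    rw [← mul_assoc, ← Real.exp_add, ← mul_assoc, ← Real.exp_add] at h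
    have e1 : c * S + -(c * S) = 0 := by ring
    have e2 : c * S + -(c * T) = c * (S - T) := by ring
    rw [e1, e2, Real.exp_zero, one_mul] at h
    exact h
  have h2 := hineq S hS
  nlinarith [h1, h2]

/-- If `f : [0,∞) → (0,∞)` is nondecreasing (and integrable on bounded intervals) and
`(f(S) - f(0)) / ∫₀^S f → ϑ > 0` as `S → ∞`, then `ln f(S) / S → ϑ`. -/
theorem stmt_12 (f : ℝ → ℝ) (hpos : ∀ s, 0 ≤ s → 0 < f s)
    (hmono : MonotoneOn f (Set.Ici 0))
    (hint : ∀ S : ℝ, IntervalIntegrable f volume 0 S)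
    (ϑ : ℝ) (hϑ : 0 < ϑ)
    (hlim : Tendsto (fun S => (f S - f 0) / ∫ u in (0:ℝ)..S, f u) atTop (nhds ϑ)) :
    Tendsto (fun S => Real.log (f S) / S) atTop (nhds ϑ) := by
  set F : ℝ → ℝ := fun S => ∫ u in (0:ℝ)..S, f u with hFdef
  have hintab : ∀ a b : ℝ, IntervalIntegrable f volume a b :=
    fun a b => (hint a).symm.trans (hint b)
  have hFcont : Continuous F := intervalIntegral.continuous_primitive hintab 0
  have hflow : ∀ S, 0 ≤ S → S * f 0 ≤ F S := by
    intro S hS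
    have h : (∫ u in (0:ℝ)..S, f 0) ≤ ∫ u in (0:ℝ)..S, f u := by
      apply intervalIntegral.integral_mono_on hS intervalIntegrable_const (hint S)
      intro x hx
      exact hmono Set.self_mem_Ici (Set.mem_Ici.mpr hx.1) hx.1
    simpa [mul_comm] using h
  have hFtop : Tendsto F atTop atTop := by
    apply tendsto_atTop_mono' atTop _ (tendsto_id.atTop_mul_const (hpos 0 le_rfl))
    filter_upwards [eventually_ge_atTop (0:ℝ)] with S hS using hflow S hS
  have hFpos : ∀ S, 0 < S → 0 < F S := fun S hS =>
    lt_of_lt_of_le (mul_pos hS (hpos 0 le_rfl)) (hflow S hS.le)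
  have hratio : Tendsto (fun S => f S / F S) atTop (nhds ϑ) := by
    have h2 : Tendsto (fun S => f 0 / F S) atTop (nhds 0) :=
      tendsto_const_nhds.div_atTop hFtop
    have h3 := hlim.add h2
    rw [add_zero] at h3
    refine h3.congr (fun S => ?_)
    rw [← add_div, sub_add_cancel]
  -- key: log (F S) / S → ϑ
  have hlogF : Tendsto (fun S => Real.log (F S) / S) atTop (nhds ϑ) := by
    rw [tendsto_order]
    constructor
    · -- lower bound
      intro b hb
      set c : ℝ := max (ϑ/2) ((b+ϑ)/2) with hcdef
      have hc0 : 0 < c := lt_max_of_lt_left (by linarith)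
      have hcϑ : c < ϑ := max_lt (by linarith) (by linarith)
      have hbc : b < c := lt_max_of_lt_right (by linarith)
      have hev : ∀ᶠ u in atTop, c * F u ≤ f u := by
        filter_upwards [hratio.eventually (lt_mem_nhds hcϑ), eventually_gt_atTop (0:ℝ)]
          with u h1 h2
        have h3 := (lt_div_iff₀ (hFpos u h2)).mp h1
        linarith
      obtain ⟨T₀, hT₀⟩ := eventually_atTop.mp hev
      set T : ℝ := max T₀ 1 with hTdef
      have hTpos : (0:ℝ) < T := lt_of_lt_of_le one_pos (le_max_right _ _)
      have hFT : 0 < F T := hFpos T hTpos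
      have hineq : ∀ S, T ≤ S → F T + c * ∫ u in T..S, F u ≤ F S := by
        intro S hS
        have hsplit : F T + ∫ u in T..S, f u = F S := by
          rw [hFdef]
          exact intervalIntegral.integral_add_adjacent_intervals (hint T) (hintab T S)
        have hgl : c * ∫ u in T..S, F u ≤ ∫ u in T..S, f u := by
          rw [← intervalIntegral.integral_const_mul]
          apply intervalIntegral.integral_mono_on hS
            ((continuous_const.mul hFcont).intervalIntegrable _ _) (hintab T S)
          intro x hx
          exact hT₀ x (le_trans (le_max_left _ _) hx.1)
        linarith
      have hgron := my_gronwall_ge F hFcont T c hc0 hineq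
      have hlog : ∀ S, T ≤ S → Real.log (F T) + c * (S - T) ≤ Real.log (F S) := by
        intro S hS
        have h1 := hgron S hS
        have h2 : 0 < F T * Real.exp (c*(S-T)) := mul_pos hFT (Real.exp_pos _)
        calc Real.log (F T) + c*(S-T)
            = Real.log (F T * Real.exp (c*(S-T))) := by
              rw [Real.log_mul hFT.ne' (Real.exp_pos _).ne', Real.log_exp]
          _ ≤ Real.log (F S) := Real.log_le_log h2 h1
      have haux : Tendsto (fun S : ℝ => c + (Real.log (F T) - c*T)/S) atTop (nhds c) := by
        have h1 : Tendsto (fun _ : ℝ => c) atTop (nhds c) := tendsto_const_nhds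
        have h2 : Tendsto (fun S : ℝ => (Real.log (F T) - c*T)/S) atTop (nhds 0) :=
          Tendsto.div_atTop tendsto_const_nhds tendsto_id
        simpa using h1.add h2
      filter_upwards [haux.eventually (lt_mem_nhds hbc), eventually_ge_atTop T,
        eventually_gt_atTop (0:ℝ)] with S h1 h2 h3
      have h4 := hlog S h2
      have h5 : c + (Real.log (F T) - c*T)/S ≤ Real.log (F S)/S := by
        have e : c + (Real.log (F T) - c*T)/S = (c*S + (Real.log (F T) - c*T))/S := by
          field_simp
        rw [e]
        exact (div_le_div_iff_of_pos_right h3).mpr (by linarith)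
      linarith
    · -- upper bound
      intro b hb
      set c : ℝ := (b+ϑ)/2 with hcdef
      have hc0 : 0 < c := by simp only [hcdef]; linarith
      have hcϑ : ϑ < c := by simp only [hcdef]; linarith
      have hbc : c < b := by simp only [hcdef]; linarith
      have hev : ∀ᶠ u in atTop, f u ≤ c * F u := by
        filter_upwards [hratio.eventually (gt_mem_nhds hcϑ), eventually_gt_atTop (0:ℝ)]
          with u h1 h2
        rw [div_lt_iff₀ (hFpos u h2)] at h1
        linarith
      obtain ⟨T₀, hT₀⟩ := eventually_atTop.mp hev
      set T : ℝ := max T₀ 1 with hTdef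
      have hTpos : (0:ℝ) < T := lt_of_lt_of_le one_pos (le_max_right _ _)
      have hFT : 0 < F T := hFpos T hTpos
      have hineq : ∀ S, T ≤ S → F S ≤ F T + c * ∫ u in T..S, F u := by
        intro S hS
        have hsplit : F T + ∫ u in T..S, f u = F S := by
          rw [hFdef]
          exact intervalIntegral.integral_add_adjacent_intervals (hint T) (hintab T S)
        have hgl : (∫ u in T..S, f u) ≤ c * ∫ u in T..S, F u := by
          rw [← intervalIntegral.integral_const_mul]
          apply intervalIntegral.integral_mono_on hS (hintab T S)
            ((continuous_const.mul hFcont).intervalIntegrable _ _)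
          intro x hx
          exact hT₀ x (le_trans (le_max_left _ _) hx.1)
        linarith
      have hgron := my_gronwall_le F hFcont T c hc0 hineq
      have hlog : ∀ S, T ≤ S → Real.log (F S) ≤ Real.log (F T) + c * (S - T) := by
        intro S hS
        have h1 := hgron S hS
        calc Real.log (F S)
            ≤ Real.log (F T * Real.exp (c*(S-T))) :=
              Real.log_le_log (hFpos S (lt_of_lt_of_le hTpos hS)) h1
          _ = Real.log (F T) + c*(S-T) := by
              rw [Real.log_mul hFT.ne' (Real.exp_pos _).ne', Real.log_exp]
      have haux : Tendsto (fun S : ℝ => c + (Real.log (F T) - c*T)/S) atTop (nhds c) := by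
        have h1 : Tendsto (fun _ : ℝ => c) atTop (nhds c) := tendsto_const_nhds
        have h2 : Tendsto (fun S : ℝ => (Real.log (F T) - c*T)/S) atTop (nhds 0) :=
          Tendsto.div_atTop tendsto_const_nhds tendsto_id
        simpa using h1.add h2
      filter_upwards [haux.eventually (gt_mem_nhds hbc), eventually_ge_atTop T,
        eventually_gt_atTop (0:ℝ)] with S h1 h2 h3
      have h4 := hlog S h2
      have h5 : Real.log (F S)/S ≤ c + (Real.log (F T) - c*T)/S := by
        have e : c + (Real.log (F T) - c*T)/S = (c*S + (Real.log (F T) - c*T))/S := by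
          field_simp
        rw [e]
        exact (div_le_div_iff_of_pos_right h3).mpr (by linarith)
      linarith
  -- combine
  have hlogdiff : Tendsto (fun S => Real.log (f S) - Real.log (F S)) atTop
      (nhds (Real.log ϑ)) := by
    have h := (Real.continuousAt_log hϑ.ne').tendsto.comp hratio
    apply h.congr'
    filter_upwards [eventually_gt_atTop (0:ℝ)] with S hS
    exact Real.log_div (hpos S hS.le).ne' (hFpos S hS).ne'
  have hdiffS : Tendsto (fun S => (Real.log (f S) - Real.log (F S)) / S) atTop (nhds 0) := by
    have h := hlogdiff.mul tendsto_inv_atTop_zero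
    rw [mul_zero] at h
    exact h.congr (fun S => (div_eq_mul_inv _ _).symm)
  have hfin := hdiffS.add hlogF
  rw [zero_add] at hfin
  refine hfin.congr (fun S => ?_)
  rw [← add_div, sub_add_cancel]
end

section
/- Let (y_t : t ∈ {τ, τ+1, ...}) be a sequence of positive reals with y_{t+1} - y_t ∈ [0, m] for all t ≥ τ, and suppose (y_T - y_τ) / (Σ_{t=τ}^{T-1} y_t / t) → ϑ > 0 as T → ∞. Then (ln y_T)/(ln(T/τ)) → ϑ as T → ∞. -/
open Filter

lemma stolz_aux (d e : ℕ → ℝ) (N : ℕ) (he : ∀ t, N ≤ t → 0 < e t)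
    (hE : Tendsto (fun T => ∑ t ∈ Finset.Ico N T, e t) atTop atTop)
    (ϑ : ℝ) (h : Tendsto (fun t => d t / e t) atTop (nhds ϑ)) :
    Tendsto (fun T => (∑ t ∈ Finset.Ico N T, d t) / (∑ t ∈ Finset.Ico N T, e t))
      atTop (nhds ϑ) := by
  rw [Metric.tendsto_atTop]
  intro ε hε
  obtain ⟨M₀, hM₀⟩ := (Metric.tendsto_atTop.mp h) (ε/2) (by positivity)
  set M := max M₀ N with hMdef
  have hMN : N ≤ M := le_max_right _ _
  have hkey : ∀ t, M ≤ t → |d t - ϑ * e t| ≤ ε/2 * e t := by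
    intro t ht
    have h1 := hM₀ t (le_trans (le_max_left _ _) ht)
    have h2 := he t (hMN.trans ht)
    rw [Real.dist_eq] at h1
    have h3 : |d t / e t - ϑ| * e t ≤ ε/2 * e t :=
      mul_le_mul_of_nonneg_right h1.le h2.le
    have h4 : (d t / e t - ϑ) * e t = d t - ϑ * e t := by field_simp
    calc |d t - ϑ * e t| = |(d t / e t - ϑ) * e t| := by rw [h4]
      _ = |d t / e t - ϑ| * |e t| := abs_mul _ _
      _ = |d t / e t - ϑ| * e t := by rw [abs_of_pos h2]
      _ ≤ ε/2 * e t := h3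
  set C := |∑ t ∈ Finset.Ico N M, (d t - ϑ * e t)| with hCdef
  have hC0 : 0 ≤ C := abs_nonneg _
  obtain ⟨K₀, hK₀⟩ := (eventually_atTop.mp (hE.eventually_ge_atTop ((C + 1) * (2/ε))))
  refine ⟨max K₀ (M+1), fun T hT => ?_⟩
  have hTK : K₀ ≤ T := le_trans (le_max_left _ _) hT
  have hTM : M ≤ T := by have := le_trans (le_max_right _ _) hT; omega
  have hElarge : (C + 1) * (2/ε) ≤ ∑ t ∈ Finset.Ico N T, e t := hK₀ T hTK
  have hEpos : 0 < ∑ t ∈ Finset.Ico N T, e t :=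
    lt_of_lt_of_le (by positivity) hElarge
  have hsplit : ∑ t ∈ Finset.Ico N T, (d t - ϑ * e t)
      = (∑ t ∈ Finset.Ico N M, (d t - ϑ * e t)) + ∑ t ∈ Finset.Ico M T, (d t - ϑ * e t) :=
    (Finset.sum_Ico_consecutive _ hMN hTM).symm
  have hsub : ∑ t ∈ Finset.Ico M T, e t ≤ ∑ t ∈ Finset.Ico N T, e t := by
    apply Finset.sum_le_sum_of_subset_of_nonneg (Finset.Ico_subset_Ico hMN le_rfl)
    intro t ht _
    exact (he t (Finset.mem_Ico.mp ht).1).le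
  have htail : |∑ t ∈ Finset.Ico M T, (d t - ϑ * e t)| ≤ ε/2 * ∑ t ∈ Finset.Ico N T, e t := by
    calc |∑ t ∈ Finset.Ico M T, (d t - ϑ * e t)|
        ≤ ∑ t ∈ Finset.Ico M T, |d t - ϑ * e t| := Finset.abs_sum_le_sum_abs _ _
      _ ≤ ∑ t ∈ Finset.Ico M T, ε/2 * e t := by
          apply Finset.sum_le_sum
          intro t ht
          exact hkey t (Finset.mem_Ico.mp ht).1
      _ = ε/2 * ∑ t ∈ Finset.Ico M T, e t := by rw [Finset.mul_sum]
      _ ≤ ε/2 * ∑ t ∈ Finset.Ico N T, e t := by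
          apply mul_le_mul_of_nonneg_left hsub (by positivity)
  have hnum : |(∑ t ∈ Finset.Ico N T, d t) - ϑ * ∑ t ∈ Finset.Ico N T, e t|
      ≤ C + ε/2 * ∑ t ∈ Finset.Ico N T, e t := by
    have heq : (∑ t ∈ Finset.Ico N T, d t) - ϑ * ∑ t ∈ Finset.Ico N T, e t
        = ∑ t ∈ Finset.Ico N T, (d t - ϑ * e t) := by
      rw [Finset.sum_sub_distrib, Finset.mul_sum]
    rw [heq, hsplit]
    exact (abs_add_le _ _).trans (add_le_add le_rfl htail)
  rw [Real.dist_eq]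
  have hdiv : |(∑ t ∈ Finset.Ico N T, d t) / (∑ t ∈ Finset.Ico N T, e t) - ϑ|
      = |(∑ t ∈ Finset.Ico N T, d t) - ϑ * ∑ t ∈ Finset.Ico N T, e t|
        / ∑ t ∈ Finset.Ico N T, e t := by
    have h5 : (∑ t ∈ Finset.Ico N T, d t) / (∑ t ∈ Finset.Ico N T, e t) - ϑ
        = ((∑ t ∈ Finset.Ico N T, d t) - ϑ * ∑ t ∈ Finset.Ico N T, e t)
          / ∑ t ∈ Finset.Ico N T, e t := by field_simp
    rw [h5, abs_div, abs_of_pos hEpos]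
  rw [hdiv]
  have hfrac : C / ∑ t ∈ Finset.Ico N T, e t < ε/2 := by
    rw [div_lt_iff₀ hEpos]
    calc C < C + 1 := lt_add_one C
      _ = ε/2 * ((C+1) * (2/ε)) := by field_simp
      _ ≤ ε/2 * ∑ t ∈ Finset.Ico N T, e t := by
          exact mul_le_mul_of_nonneg_left hElarge (by positivity)
  calc |(∑ t ∈ Finset.Ico N T, d t) - ϑ * ∑ t ∈ Finset.Ico N T, e t|
        / ∑ t ∈ Finset.Ico N T, e t
      ≤ (C + ε/2 * ∑ t ∈ Finset.Ico N T, e t) / ∑ t ∈ Finset.Ico N T, e t :=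
        (div_le_div_iff_of_pos_right hEpos).mpr hnum
    _ = C / (∑ t ∈ Finset.Ico N T, e t) + ε/2 := by
        rw [add_div, mul_div_assoc, div_self hEpos.ne', mul_one]
    _ < ε/2 + ε/2 := by linarith
    _ = ε := by ring

/-- If `(y_t : t ≥ τ)` is a sequence of positive reals with increments in `[0, m]` and
`(y_T - y_τ) / ∑_{t=τ}^{T-1} y_t/t → ϑ > 0` as `T → ∞`, then
`ln y_T / ln(T/τ) → ϑ`. -/
theorem stmt_14 (τ : ℕ) (hτ : 1 ≤ τ) (m : ℝ) (hm : 1 ≤ m)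
    (y : ℕ → ℝ) (hpos : ∀ t, τ ≤ t → 0 < y t)
    (hinc : ∀ t, τ ≤ t → 0 ≤ y (t + 1) - y t ∧ y (t + 1) - y t ≤ m)
    (ϑ : ℝ) (hϑ : 0 < ϑ)
    (hlim : Tendsto (fun T : ℕ => (y T - y τ) / ∑ t ∈ Finset.Ico τ T, y t / (t : ℝ))
      atTop (nhds ϑ)) :
    Tendsto (fun T : ℕ => Real.log (y T) / Real.log ((T : ℝ) / (τ : ℝ))) atTop (nhds ϑ) := by
  have hτR : (0:ℝ) < τ := by exact_mod_cast Nat.lt_of_lt_of_le Nat.zero_lt_one hτ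
  set S : ℕ → ℝ := fun T => ∑ t ∈ Finset.Ico τ T, y t / (t:ℝ) with hSdef
  set N := τ + 1 with hNdef
  -- monotonicity of y on [τ, ∞)
  have hmono : ∀ s t, τ ≤ s → s ≤ t → y s ≤ y t := by
    intro s t hs hst
    induction t, hst using Nat.le_induction with
    | base => exact le_rfl
    | succ n hn ih => exact ih.trans (by linarith [(hinc n (hs.trans hn)).1])
  have hSpos : ∀ T, N ≤ T → 0 < S T := by
    intro T hT
    apply Finset.sum_pos'
    · intro t ht
      have ht1 : τ ≤ t := (Finset.mem_Ico.mp ht).1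
      exact div_nonneg (hpos t ht1).le (Nat.cast_nonneg t)
    · exact ⟨τ, Finset.mem_Ico.mpr ⟨le_rfl, by omega⟩, div_pos (hpos τ le_rfl) hτR⟩
  have hstep : ∀ T, τ ≤ T → S (T+1) = S T + y T / T := by
    intro T hT
    exact Finset.sum_Ico_succ_top hT _
  -- harmonic sum over Ico τ T diverges
  have hhar : Tendsto (fun T : ℕ => ∑ t ∈ Finset.Ico τ T, (1:ℝ)/t) atTop atTop := by
    have h0 : Tendsto (fun n : ℕ => ∑ i ∈ Finset.range n, (1:ℝ)/(i+1)) atTop atTop :=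
      Real.tendsto_sum_range_one_div_nat_succ_atTop
    have h1 : Tendsto (fun T : ℕ => (1/(τ:ℝ)) * ∑ i ∈ Finset.range (T - τ), (1:ℝ)/(i+1))
        atTop atTop :=
      Tendsto.const_mul_atTop (by positivity) (h0.comp (tendsto_sub_atTop_nat τ))
    apply tendsto_atTop_mono _ h1
    intro T
    rw [Finset.sum_Ico_eq_sum_range, Finset.mul_sum]
    apply Finset.sum_le_sum
    intro i _
    rw [div_mul_div_comm, one_mul]
    apply one_div_le_one_div_of_le
    · push_cast; positivity
    · push_cast
      have : (1:ℝ) ≤ τ := by exact_mod_cast hτ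
      nlinarith [Nat.cast_nonneg (α := ℝ) i]
  have hStop : Tendsto S atTop atTop := by
    apply tendsto_atTop_mono _ (Tendsto.const_mul_atTop (hpos τ le_rfl) hhar)
    intro T
    rw [Finset.mul_sum]
    apply Finset.sum_le_sum
    intro t ht
    have ht1 : τ ≤ t := (Finset.mem_Ico.mp ht).1
    have htR : (0:ℝ) < t := by
      have : (0:ℕ) < t := by omega
      exact_mod_cast this
    rw [mul_one_div]
    gcongr
    exact hmono τ t le_rfl ht1
  -- c T := y T / S T → ϑ
  set c : ℕ → ℝ := fun T => y T / S T with hcdef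
  have hc : Tendsto c atTop (nhds ϑ) := by
    have h2 : Tendsto (fun T => (y T - y τ) / S T + y τ * (S T)⁻¹) atTop (nhds (ϑ + y τ * 0)) :=
      hlim.add (tendsto_const_nhds.mul hStop.inv_tendsto_atTop)
    rw [mul_zero, add_zero] at h2
    apply h2.congr'
    filter_upwards [eventually_ge_atTop N] with T hT
    have hS := hSpos T hT
    field_simp [hcdef]
    rw [show S T * c T = y T from by rw [mul_comm]; exact div_mul_cancel₀ _ hS.ne']
    ring
  have hcpos : ∀ T, N ≤ T → 0 < c T := fun T hT => div_pos (hpos T (by omega)) (hSpos T hT)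
  -- slope of log at 1
  have hφ : Tendsto (fun z : ℝ => Real.log z / (z - 1)) (nhdsWithin 1 {(1:ℝ)}ᶜ) (nhds 1) := by
    have hder : HasDerivAt Real.log 1 1 := by
      simpa using Real.hasDerivAt_log one_ne_zero
    have h := hasDerivAt_iff_tendsto_slope.mp hder
    apply h.congr
    intro z
    simp [slope_def_field, div_eq_div_iff]
  -- auxiliary sequences
  set u : ℕ → ℝ := fun t => 1 + c t / t with hudef
  set v : ℕ → ℝ := fun t => 1 + 1 / (t:ℝ) with hvdef
  have ht0 : Tendsto (fun t : ℕ => (1:ℝ)/t) atTop (nhds 0) := tendsto_one_div_atTop_nhds_zero_nat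
  have hu : Tendsto u atTop (nhdsWithin 1 {(1:ℝ)}ᶜ) := by
    rw [tendsto_nhdsWithin_iff]
    constructor
    · have : Tendsto (fun t : ℕ => 1 + c t * (1/(t:ℝ))) atTop (nhds (1 + ϑ * 0)) :=
        tendsto_const_nhds.add (hc.mul ht0)
      rw [mul_zero, add_zero] at this
      apply this.congr
      intro t
      rw [mul_one_div]
    · filter_upwards [eventually_ge_atTop N] with t hT
      have htR : (0:ℝ) < t := by
        have : (0:ℕ) < t := by omega
        exact_mod_cast this
      have : 0 < c t / t := div_pos (hcpos t hT) htR
      simp only [Set.mem_compl_iff, Set.mem_singleton_iff, hudef]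
      intro habs
      nlinarith [habs]
  have hv : Tendsto v atTop (nhdsWithin 1 {(1:ℝ)}ᶜ) := by
    rw [tendsto_nhdsWithin_iff]
    constructor
    · have : Tendsto (fun t : ℕ => 1 + 1/(t:ℝ)) atTop (nhds (1 + 0)) :=
        tendsto_const_nhds.add ht0
      rw [add_zero] at this
      exact this
    · filter_upwards [eventually_ge_atTop N] with t hT
      have htR : (0:ℝ) < t := by
        have : (0:ℕ) < t := by omega
        exact_mod_cast this
      have : 0 < 1 / (t:ℝ) := by positivity
      simp only [Set.mem_compl_iff, Set.mem_singleton_iff, hvdef]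
      intro habs
      nlinarith [habs]
  -- d and e
  set L : ℕ → ℝ := fun t => Real.log (S t) with hLdef
  set g : ℕ → ℝ := fun t => Real.log (t:ℝ) with hgdef
  set d : ℕ → ℝ := fun t => L (t+1) - L t with hddef
  set e : ℕ → ℝ := fun t => g (t+1) - g t with hedef
  have hepos : ∀ t, N ≤ t → 0 < e t := by
    intro t ht
    have htR : (0:ℝ) < t := by
      have : (0:ℕ) < t := by omega
      exact_mod_cast this
    have : Real.log (t:ℝ) < Real.log ((t:ℝ)+1) := Real.log_lt_log htR (by linarith)
    simp only [hedef, hgdef, sub_pos]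
    push_cast
    exact this
  -- key per-step identities
  have hu1 : ∀ t, N ≤ t → u t - 1 = c t / t := fun t ht => by simp [hudef]
  have hv1 : ∀ t, (v t : ℝ) - 1 = 1 / t := fun t => by simp [hvdef]
  have hde : ∀ t, N ≤ t → d t = Real.log (u t) ∧ e t = Real.log (v t) := by
    intro t ht
    have htR : (0:ℝ) < t := by
      have : (0:ℕ) < t := by omega
      exact_mod_cast this
    have hSt := hSpos t ht
    have hSt1 := hSpos (t+1) (by omega)
    constructor
    · have h1 : S (t+1) / S t = u t := by
        rw [hstep t (by omega), add_div, div_self hSt.ne']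
        simp only [hudef, hcdef]
        rw [div_div, div_div, mul_comm]
      simp only [hddef, hLdef]
      rw [← Real.log_div hSt1.ne' hSt.ne', h1]
    · have h2 : ((t:ℝ)+1) / t = v t := by
        simp only [hvdef]
        field_simp
      simp only [hedef, hgdef]
      push_cast
      rw [← Real.log_div (by linarith) htR.ne', h2]
  -- ratio of increments tends to ϑ
  have hratio : Tendsto (fun t => d t / e t) atTop (nhds ϑ) := by
    have hA : Tendsto (fun t => Real.log (u t) / (u t - 1)) atTop (nhds 1) := hφ.comp hu
    have hB : Tendsto (fun t => Real.log (v t) / (v t - 1)) atTop (nhds 1) := hφ.comp hv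
    have hmain : Tendsto
        (fun t => (Real.log (u t) / (u t - 1)) * c t / (Real.log (v t) / (v t - 1)))
        atTop (nhds (1 * ϑ / 1)) := (hA.mul hc).div hB one_ne_zero
    rw [one_mul, div_one] at hmain
    apply hmain.congr'
    filter_upwards [eventually_ge_atTop N] with t ht
    have htR : (0:ℝ) < t := by
      have : (0:ℕ) < t := by omega
      exact_mod_cast this
    have hct := hcpos t ht
    have hvlog : 0 < Real.log (v t) := by
      apply Real.log_pos
      simp only [hvdef]
      have : 0 < 1/(t:ℝ) := by positivity
      linarith
    obtain ⟨hd1, he1⟩ := hde t ht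
    rw [hd1, he1, hu1 t ht, hv1 t]
    field_simp
  -- telescoping sums
  have htel : ∀ (f : ℕ → ℝ) (T : ℕ), N ≤ T →
      ∑ t ∈ Finset.Ico N T, (f (t+1) - f t) = f T - f N := by
    intro f T hT
    rw [Finset.sum_Ico_eq_sum_range]
    have h : ∑ i ∈ Finset.range (T - N), (f (N + i + 1) - f (N + i))
        = f (N + (T - N)) - f (N + 0) := Finset.sum_range_sub (fun i => f (N + i)) (T - N)
    rw [show N + (T - N) = T from by omega, Nat.add_zero] at h
    exact h
  have hEsum : ∀ T, N ≤ T → ∑ t ∈ Finset.Ico N T, e t = g T - g N := fun T hT => htel g T hT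
  have hDsum : ∀ T, N ≤ T → ∑ t ∈ Finset.Ico N T, d t = L T - L N := fun T hT => htel L T hT
  have hgtop : Tendsto g atTop atTop := Real.tendsto_log_atTop.comp tendsto_natCast_atTop_atTop
  have hE : Tendsto (fun T => ∑ t ∈ Finset.Ico N T, e t) atTop atTop := by
    apply Tendsto.congr' _ (tendsto_atTop_add_const_right atTop (-(g N)) hgtop)
    filter_upwards [eventually_ge_atTop N] with T hT
    rw [← sub_eq_add_neg, ← hEsum T hT]
  have hR : Tendsto (fun T => (L T - L N) / (g T - g N)) atTop (nhds ϑ) := by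
    apply (stolz_aux d e N hepos hE ϑ hratio).congr'
    filter_upwards [eventually_ge_atTop N] with T hT
    rw [hEsum T hT, hDsum T hT]
  -- final assembly
  set D : ℕ → ℝ := fun T => g T - Real.log τ with hDdef
  have hDtop : Tendsto D atTop atTop := by
    have := tendsto_atTop_add_const_right atTop (-(Real.log τ)) hgtop
    apply this.congr
    intro T
    rw [← sub_eq_add_neg]
  have hBD : Tendsto (fun T => (g T - g N) / D T) atTop (nhds 1) := by
    have h1 : Tendsto (fun T => 1 - (g N - Real.log τ) * (D T)⁻¹) atTop
        (nhds (1 - (g N - Real.log τ) * 0)) :=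
      tendsto_const_nhds.sub (tendsto_const_nhds.mul hDtop.inv_tendsto_atTop)
    rw [mul_zero, sub_zero] at h1
    apply h1.congr'
    filter_upwards [hDtop.eventually_gt_atTop 0] with T hD0
    field_simp
    ring
  have hk : Tendsto (fun T => (Real.log (c T) + L N) * (D T)⁻¹) atTop
      (nhds ((Real.log ϑ + L N) * 0)) :=
    ((hc.log hϑ.ne').add tendsto_const_nhds).mul hDtop.inv_tendsto_atTop
  rw [mul_zero] at hk
  have hfin : Tendsto (fun T => ((L T - L N)/(g T - g N)) * ((g T - g N)/(D T))
      + (Real.log (c T) + L N) * (D T)⁻¹) atTop (nhds (ϑ * 1 + 0)) := (hR.mul hBD).add hk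
  rw [mul_one, add_zero] at hfin
  apply hfin.congr'
  filter_upwards [eventually_ge_atTop (N+1)] with T hT
  have hTR : (0:ℝ) < T := by
    have : (0:ℕ) < T := by omega
    exact_mod_cast this
  have hNT : (N:ℝ) < T := by exact_mod_cast show N < T by omega
  have hNR : (0:ℝ) < N := by
    have : (0:ℕ) < N := by omega
    exact_mod_cast this
  have hτT : (τ:ℝ) < T := by exact_mod_cast show τ < T by omega
  have hB0 : 0 < g T - g N := sub_pos.mpr (Real.log_lt_log hNR hNT)
  have hD0 : 0 < D T := sub_pos.mpr (Real.log_lt_log hτR hτT)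
  have hST := hSpos T (by omega)
  have hcT := hcpos T (by omega)
  have hyT : y T = c T * S T := (div_mul_cancel₀ _ hST.ne').symm
  have hlogy : Real.log (y T) = Real.log (c T) + L T := by
    rw [hyT, Real.log_mul hcT.ne' hST.ne']
  have hlogTτ : Real.log ((T:ℝ)/(τ:ℝ)) = D T := by
    simp only [hDdef, hgdef]
    rw [Real.log_div hTR.ne' hτR.ne']
  rw [hlogy, hlogTτ]
  field_simp
  ring
end
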